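/- arXiv:1812.00004 — 3 statements merged into one kernel-verified Lean document; each statement's English description precedes it below -/
import Mathlib

section
/- Let X be a subcube of a cluster of HCN_n inducing Q_g, 1 ≤ g ≤ n−1, and set F₁ = N(X) and F₂ = N[X]. Then F₁ and F₂ are distinct g-good-neighbor faulty sets of HCN_n, |F₁| = 2^g(n+1−g), |F₂| = 2^g(n+2−g), and there is no edge between V(HCN_n) \ (F₁ ∪ F₂) and the symmetric difference F₁ Δ F₂. -/
/-- Vertices of the hierarchical cubic network: pairs (cluster label, position). -/
abbrev HVert (n : ℕ) := (Fin n → Bool) × (Fin n → Bool)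

/-- The hierarchical cubic network HCN_n. Within a cluster (same first coordinate),
two vertices are adjacent iff their second coordinates differ in exactly one bit.
Crossing edges: (x,y) with x ≠ y is adjacent to (y,x); (x,x) is adjacent to (x̄,x̄). -/
def HCN (n : ℕ) : SimpleGraph (HVert n) :=
  SimpleGraph.fromRel (fun u v =>
    (u.1 = v.1 ∧ (Finset.univ.filter (fun i => u.2 i ≠ v.2 i)).card = 1) ∨
    (u.1 ≠ u.2 ∧ v = (u.2, u.1)) ∨
    (u.1 = u.2 ∧ v = (fun i => !u.1 i, fun i => !u.2 i)))

/-- `u` and `v` are joined by a crossing edge of HCN_n. -/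
def IsCrossing (n : ℕ) (u v : HVert n) : Prop :=
  ((u.1 ≠ u.2 ∧ v = (u.2, u.1)) ∨ (u.1 = u.2 ∧ v = (fun i => !u.1 i, fun i => !u.2 i))) ∨
  ((v.1 ≠ v.2 ∧ u = (v.2, v.1)) ∨ (v.1 = v.2 ∧ u = (fun i => !v.1 i, fun i => !v.2 i)))

/-- `F` is a g-good-neighbor faulty set of HCN_n: every vertex outside `F`
has at least `g` neighbors outside `F`. -/
def GoodNbrSet (n g : ℕ) (F : Set (HVert n)) : Prop :=
  ∀ v ∉ F, g ≤ (((HCN n).neighborSet v) \ F).ncard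

/-- `X` is a subcube of a cluster of HCN_n inducing a copy of Q_g: all vertices
of `X` share the first coordinate `x`, and their second coordinates form a
g-dimensional subcube (they agree on a set `S` of `n - g` fixed coordinates). -/
def IsClusterSubcube (n g : ℕ) (X : Set (HVert n)) : Prop :=
  ∃ (x : Fin n → Bool) (S : Finset (Fin n)) (f : Fin n → Bool),
    S.card = n - g ∧ X = {v | v.1 = x ∧ ∀ i ∈ S, v.2 i = f i}

/-- The (open) neighborhood of a vertex set in HCN_n. -/
def setNbhd (n : ℕ) (X : Set (HVert n)) : Set (HVert n) :=
  {w | w ∉ X ∧ ∃ v ∈ X, (HCN n).Adj v w}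

namespace HCNaux

variable {n : ℕ}

/-- flip one coordinate -/
def flip (y : Fin n → Bool) (i : Fin n) : Fin n → Bool := Function.update y i (!y i)

lemma flip_apply_self (y : Fin n → Bool) (i : Fin n) : flip y i i = !y i := by
  simp [flip]

lemma flip_apply_ne (y : Fin n → Bool) {i j : Fin n} (h : j ≠ i) : flip y i j = y j := by
  simp [flip, h]

lemma flip_ne (y : Fin n → Bool) (i : Fin n) : flip y i ≠ y := by
  intro h
  have := congrFun h i
  simp [flip] at this

lemma flip_inj {y : Fin n → Bool} {i j : Fin n} (h : flip y i = flip y j) : i = j := by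
  by_contra hij
  have := congrFun h i
  rw [flip_apply_self, flip_apply_ne y hij] at this
  simp at this

/-- hamming distance one characterization -/
lemma hd1_iff (y z : Fin n → Bool) :
    (Finset.univ.filter (fun i => y i ≠ z i)).card = 1 ↔ ∃ i, z = flip y i := by
  constructor
  · intro h
    obtain ⟨i, hi⟩ := Finset.card_eq_one.mp h
    refine ⟨i, ?_⟩
    funext j
    by_cases hj : j = i
    · subst hj
      have : j ∈ Finset.univ.filter (fun i => y i ≠ z i) := by rw [hi]; simp
      simp only [Finset.mem_filter] at this
      rw [flip_apply_self]
      revert this; cases y j <;> cases z j <;> simp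
    · have : j ∉ Finset.univ.filter (fun i => y i ≠ z i) := by rw [hi]; simp [hj]
      simp only [Finset.mem_filter, Finset.mem_univ, true_and, not_not] at this
      rw [flip_apply_ne y hj, this]
  · rintro ⟨i, rfl⟩
    rw [Finset.card_eq_one]
    refine ⟨i, ?_⟩
    ext j
    simp only [Finset.mem_filter, Finset.mem_univ, true_and, Finset.mem_singleton]
    by_cases hj : j = i
    · subst hj; simp [flip_apply_self]
    · simp [flip_apply_ne y hj, hj]

/-- the crossing neighbor -/
def cross (v : HVert n) : HVert n :=
  if v.1 = v.2 then (fun i => !v.1 i, fun i => !v.2 i) else (v.2, v.1)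

lemma cross_fst_ne (hn : 0 < n) (v : HVert n) : (cross v).1 ≠ v.1 := by
  unfold cross
  split
  · intro h
    have := congrFun h ⟨0, hn⟩
    simp at this
  · rename_i h
    exact fun h2 => h h2.symm

lemma cross_cross (v : HVert n) (hn : 0 < n) : cross (cross v) = v := by
  obtain ⟨a, b⟩ := v
  by_cases h : a = b
  · subst h
    have h1 : cross (a, a) = (fun i => !a i, fun i => !a i) := by rw [cross, if_pos rfl]
    rw [h1, cross, if_pos rfl]
    simp [Bool.not_not]
  · have h1 : cross (a, b) = (b, a) := by rw [cross]; exact if_neg h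
    rw [h1, cross]
    exact if_neg (fun h2 => h h2.symm)

lemma cross_injective (hn : 0 < n) : Function.Injective (cross (n := n)) := by
  intro a b h
  have := congrArg cross h
  rwa [cross_cross a hn, cross_cross b hn] at this

lemma cross_ne (hn : 0 < n) (v : HVert n) : cross v ≠ v :=
  fun h => cross_fst_ne hn v (congrArg Prod.fst h)

/-- adjacency characterization -/
lemma adj_iff (hn : 0 < n) (u v : HVert n) :
    (HCN n).Adj u v ↔ (u.1 = v.1 ∧ ∃ i, v.2 = flip u.2 i) ∨ v = cross u := by
  rw [HCN, SimpleGraph.fromRel_adj]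
  constructor
  · rintro ⟨hne, h | h⟩
    · rcases h with ⟨h1, h2⟩ | ⟨h1, h2⟩ | ⟨h1, h2⟩
      · exact Or.inl ⟨h1, (hd1_iff u.2 v.2).mp h2⟩
      · right; rw [cross, if_neg h1, h2]
      · right; rw [cross, if_pos h1, h2]
    · rcases h with ⟨h1, h2⟩ | ⟨h1, h2⟩ | ⟨h1, h2⟩
      · refine Or.inl ⟨h1.symm, ?_⟩
        have heq : Finset.univ.filter (fun i => u.2 i ≠ v.2 i)
            = Finset.univ.filter (fun i => v.2 i ≠ u.2 i) := by
          ext i; simp only [Finset.mem_filter]; tauto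
        exact (hd1_iff u.2 v.2).mp (heq ▸ h2)
      · right
        rw [cross]
        have hu1 : u.1 = v.2 := congrArg Prod.fst h2
        have hu2 : u.2 = v.1 := congrArg Prod.snd h2
        rw [if_neg (by rw [hu1, hu2]; exact fun hh => h1 hh.symm)]
        rw [hu1, hu2]
      · right
        rw [cross]
        have hu1 : u.1 = fun i => !v.1 i := congrArg Prod.fst h2
        have hu2 : u.2 = fun i => !v.2 i := congrArg Prod.snd h2
        rw [if_pos (by rw [hu1, hu2, h1])]
        rw [hu1, hu2]
        have : v = (v.1, v.2) := rfl
        rw [this]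
        refine Prod.ext ?_ ?_ <;> · simp only [Bool.not_not]
  · rintro (⟨h1, i, h2⟩ | rfl)
    · refine ⟨?_, Or.inl (Or.inl ⟨h1, (hd1_iff u.2 v.2).mpr ⟨i, h2⟩⟩)⟩
      intro h
      rw [h] at h2
      exact flip_ne v.2 i h2.symm
    · refine ⟨(cross_ne hn u).symm, Or.inl ?_⟩
      rw [cross]
      split
      · rename_i h; exact Or.inr (Or.inr ⟨h, rfl⟩)
      · rename_i h; exact Or.inr (Or.inl ⟨h, rfl⟩)

end HCNaux

namespace HCNaux

variable {n : ℕ}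

/-- equiv for constrained functions -/
def constrEquiv (T : Finset (Fin n)) (f₀ : Fin n → Bool) :
    {y : Fin n → Bool // ∀ i ∈ T, y i = f₀ i} ≃ ({i : Fin n // i ∉ T} → Bool) where
  toFun y j := y.1 j.1
  invFun h := ⟨fun i => if hi : i ∈ T then f₀ i else h ⟨i, hi⟩, fun i hi => dif_pos hi⟩
  left_inv y := by
    apply Subtype.ext
    funext i
    by_cases hi : i ∈ T
    · simp only [dif_pos hi]; exact (y.2 i hi).symm
    · simp only [dif_neg hi]
  right_inv h := by funext j; simp only [dif_neg j.2]

lemma ncard_constr (T : Finset (Fin n)) (f₀ : Fin n → Bool) :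
    Set.ncard {y : Fin n → Bool | ∀ i ∈ T, y i = f₀ i} = 2 ^ (n - T.card) := by
  rw [← Nat.card_coe_set_eq]
  have : Nat.card ↑{y : Fin n → Bool | ∀ i ∈ T, y i = f₀ i}
      = Nat.card ({i : Fin n // i ∉ T} → Bool) :=
    Nat.card_congr ((Equiv.setCongr rfl).trans (constrEquiv T f₀))
  rw [this]
  rw [Nat.card_eq_fintype_card]
  rw [Fintype.card_fun]
  congr 1
  rw [Fintype.card_subtype_compl]
  simp [Fintype.card_subtype, Finset.filter_mem_eq_inter]

end HCNaux

namespace HCNaux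

section Main

variable {n : ℕ} (x f : Fin n → Bool) (S : Finset (Fin n))

def Cset : Set (Fin n → Bool) := {y | ∀ i ∈ S, y i = f i}
def Bset : Set (Fin n → Bool) := {y | (S.filter fun i => y i ≠ f i).card = 1}
def Xset : Set (HVert n) := {v | v.1 = x ∧ v.2 ∈ Cset f S}
def Dset : Set (HVert n) := cross '' Xset x f S
def Bset' : Set (HVert n) := (fun y => (x, y)) '' Bset f S

variable {x f S}

lemma bool_eq_not {b c : Bool} (h : b ≠ c) : b = !c := by
  cases b <;> cases c <;> simp_all

lemma flip_flip (y : Fin n → Bool) (i : Fin n) : flip (flip y i) i = y := by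
  funext j
  by_cases hj : j = i
  · subst hj; rw [flip_apply_self, flip_apply_self, Bool.not_not]
  · rw [flip_apply_ne _ hj, flip_apply_ne _ hj]

lemma B_disj_C : Bset f S ∩ Cset f S = ∅ := by
  ext y
  simp only [Set.mem_inter_iff, Set.mem_empty_iff_false, iff_false, not_and]
  intro hB hC
  obtain ⟨i, hi⟩ := Finset.card_eq_one.mp hB
  have : i ∈ S.filter fun j => y j ≠ f j := by rw [hi]; simp
  rw [Finset.mem_filter] at this
  exact this.2 (hC i this.1)

lemma mem_X_iff {v : HVert n} : v ∈ Xset x f S ↔ v.1 = x ∧ ∀ i ∈ S, v.2 i = f i :=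
  Iff.rfl

lemma cross_X_fst (hn : 0 < n) {v : HVert n} (hv : v ∈ Xset x f S) : (cross v).1 ≠ x :=
  fun h => cross_fst_ne hn v (h.trans hv.1.symm)

/-- the key structural lemma: N(X) = B' ∪ D -/
lemma nbhd_eq (hn : 0 < n) :
    setNbhd n (Xset x f S) = Bset' x f S ∪ Dset x f S := by
  ext w
  constructor
  · rintro ⟨hwX, v, hvX, hadj⟩
    rw [adj_iff hn] at hadj
    rcases hadj with ⟨h1, i, h2⟩ | rfl
    · left
      have hw1 : w.1 = x := h1 ▸ hvX.1
      have hw2 : ¬ (∀ j ∈ S, w.2 j = f j) := fun hc => hwX ⟨hw1, hc⟩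
      have hiS : i ∈ S := by
        by_contra hiS
        refine hw2 (fun j hj => ?_)
        have hji : j ≠ i := fun h => hiS (h ▸ hj)
        rw [h2, flip_apply_ne _ hji]
        exact hvX.2 j hj
      have hfilter : S.filter (fun j => w.2 j ≠ f j) = {i} := by
        ext j
        simp only [Finset.mem_filter, Finset.mem_singleton]
        constructor
        · rintro ⟨hjS, hj⟩
          by_contra hji
          rw [h2, flip_apply_ne _ hji] at hj
          exact hj (hvX.2 j hjS)
        · rintro rfl
          refine ⟨hiS, ?_⟩
          rw [h2, flip_apply_self, hvX.2 j hiS]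
          simp
      have : w.2 ∈ Bset f S := Finset.card_eq_one.mpr ⟨i, hfilter⟩
      exact ⟨w.2, this, by rw [← hw1]⟩
    · right
      exact ⟨v, hvX, rfl⟩
  · rintro (⟨y, hyB, rfl⟩ | ⟨v, hvX, rfl⟩)
    · obtain ⟨i, hi⟩ := Finset.card_eq_one.mp hyB
      have hiS : i ∈ S ∧ y i ≠ f i := by
        have : i ∈ S.filter fun j => y j ≠ f j := by rw [hi]; simp
        rwa [Finset.mem_filter] at this
      have hyC : y ∉ Cset f S := by
        intro hc
        have h0 := B_disj_C (f := f) (S := S)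
        have : y ∈ Bset f S ∩ Cset f S := ⟨hyB, hc⟩
        rw [h0] at this
        exact this
      refine ⟨fun hc => hyC hc.2, ((x, flip y i) : HVert n), ⟨rfl, fun j hj => ?_⟩, ?_⟩
      · show flip y i j = f j
        by_cases hji : j = i
        · subst hji
          rw [flip_apply_self, bool_eq_not hiS.2, Bool.not_not]
        · rw [flip_apply_ne _ hji]
          have : j ∉ S.filter fun k => y k ≠ f k := by rw [hi]; simp [hji]
          rw [Finset.mem_filter] at this
          push_neg at this
          exact this hj
      · rw [adj_iff hn]
        exact Or.inl ⟨rfl, ⟨i, by simp [flip_flip]⟩⟩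
    · refine ⟨?_, v, hvX, ?_⟩
      · intro hc
        exact cross_X_fst hn hvX hc.1
      · rw [adj_iff hn]; exact Or.inr rfl

lemma filter_constr_card (T : Finset (Fin n)) (f₀ : Fin n → Bool) :
    (Finset.univ.filter (fun y : Fin n → Bool => ∀ i ∈ T, y i = f₀ i)).card
      = 2 ^ (n - T.card) := by
  rw [← Set.toFinset_setOf, ← Set.ncard_eq_toFinset_card']
  exact ncard_constr T f₀

lemma ncard_C : (Cset f S (n := n)).ncard = 2 ^ (n - S.card) := ncard_constr S f

lemma ncard_B : (Bset f S (n := n)).ncard = S.card * 2 ^ (n - S.card) := by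
  classical
  rw [Set.ncard_eq_toFinset_card']
  have hb : (Bset f S).toFinset = S.biUnion (fun i =>
      Finset.univ.filter (fun y : Fin n → Bool =>
        ∀ j ∈ S, y j = Function.update f i (!f i) j)) := by
    ext y
    simp only [Set.mem_toFinset, Finset.mem_biUnion, Finset.mem_filter, Finset.mem_univ,
      true_and]
    constructor
    · intro hy
      obtain ⟨i, hi⟩ := Finset.card_eq_one.mp hy
      have hiS : i ∈ S ∧ y i ≠ f i := by
        have : i ∈ S.filter fun j => y j ≠ f j := by rw [hi]; simp
        rwa [Finset.mem_filter] at this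
      refine ⟨i, hiS.1, fun j hj => ?_⟩
      by_cases hji : j = i
      · subst hji
        rw [Function.update_self]
        exact bool_eq_not hiS.2
      · rw [Function.update_of_ne hji]
        have : j ∉ S.filter fun k => y k ≠ f k := by rw [hi]; simp [hji]
        rw [Finset.mem_filter] at this
        push_neg at this
        exact this hj
    · rintro ⟨i, hiS, h⟩
      have : S.filter (fun j => y j ≠ f j) = {i} := by
        ext j
        simp only [Finset.mem_filter, Finset.mem_singleton]
        constructor
        · rintro ⟨hjS, hj⟩
          by_contra hji
          rw [h j hjS, Function.update_of_ne hji] at hj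
          exact hj rfl
        · rintro rfl
          refine ⟨hiS, ?_⟩
          rw [h j hiS, Function.update_self]
          simp
      exact Finset.card_eq_one.mpr ⟨i, this⟩
  rw [hb, Finset.card_biUnion]
  · rw [Finset.sum_congr rfl (fun i _ => filter_constr_card S (Function.update f i (!f i)))]
    rw [Finset.sum_const, smul_eq_mul]
  · intro i hi j hj hij
    simp only [Finset.disjoint_left, Finset.mem_filter, Finset.mem_univ, true_and]
    rintro y hy1 hy2
    have e1 := hy1 i hi
    have e2 := hy2 i hi
    rw [Function.update_self] at e1
    rw [Function.update_of_ne hij] at e2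
    rw [e2] at e1
    simp at e1

lemma X_eq_image : Xset x f S = (fun y => ((x, y) : HVert n)) '' Cset f S := by
  ext v
  constructor
  · rintro ⟨h1, h2⟩
    exact ⟨v.2, h2, by rw [← h1]⟩
  · rintro ⟨y, hy, rfl⟩
    exact ⟨rfl, hy⟩

lemma pair_inj : Function.Injective (fun y => ((x, y) : HVert n)) :=
  fun a b h => congrArg Prod.snd h

lemma ncard_X : (Xset x f S).ncard = 2 ^ (n - S.card) := by
  rw [X_eq_image, Set.ncard_image_of_injective _ pair_inj, ncard_C]

lemma ncard_B' : (Bset' x f S).ncard = S.card * 2 ^ (n - S.card) := by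
  rw [Bset', Set.ncard_image_of_injective _ pair_inj, ncard_B]

lemma ncard_D (hn : 0 < n) : (Dset x f S).ncard = 2 ^ (n - S.card) := by
  rw [Dset, Set.ncard_image_of_injective _ (cross_injective hn), ncard_X]

lemma mem_B'_fst {w : HVert n} (hw : w ∈ Bset' x f S) : w.1 = x := by
  obtain ⟨y, _, rfl⟩ := hw; rfl

lemma mem_B'_snd {w : HVert n} (hw : w ∈ Bset' x f S) : w.2 ∈ Bset f S := by
  obtain ⟨y, hy, rfl⟩ := hw; exact hy

lemma mem_D_fst (hn : 0 < n) {w : HVert n} (hw : w ∈ Dset x f S) : w.1 ≠ x := by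
  obtain ⟨v, hv, rfl⟩ := hw; exact cross_X_fst hn hv

lemma disj_B'_D (hn : 0 < n) : Disjoint (Bset' x f S) (Dset x f S) := by
  rw [Set.disjoint_left]
  intro w hw1 hw2
  exact mem_D_fst hn hw2 (mem_B'_fst hw1)

lemma disj_X_B' : Disjoint (Xset x f S) (Bset' x f S) := by
  rw [Set.disjoint_left]
  intro w hw1 hw2
  have h1 : w.2 ∈ Bset f S ∩ Cset f S := ⟨mem_B'_snd hw2, hw1.2⟩
  rw [B_disj_C] at h1
  exact h1

lemma disj_X_D (hn : 0 < n) : Disjoint (Xset x f S) (Dset x f S) := by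
  rw [Set.disjoint_left]
  intro w hw1 hw2
  exact mem_D_fst hn hw2 hw1.1

lemma ncard_nbhd (hn : 0 < n) :
    (setNbhd n (Xset x f S)).ncard = S.card * 2 ^ (n - S.card) + 2 ^ (n - S.card) := by
  rw [nbhd_eq hn, Set.ncard_union_eq (disj_B'_D hn) (Set.toFinite _) (Set.toFinite _),
    ncard_B', ncard_D hn]

lemma ncard_closed_nbhd (hn : 0 < n) :
    (Xset x f S ∪ setNbhd n (Xset x f S)).ncard
      = 2 ^ (n - S.card) + (S.card * 2 ^ (n - S.card) + 2 ^ (n - S.card)) := by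
  have hdisj : Disjoint (Xset x f S) (setNbhd n (Xset x f S)) := by
    rw [nbhd_eq hn]
    exact Set.disjoint_union_right.mpr ⟨disj_X_B', disj_X_D hn⟩
  rw [Set.ncard_union_eq hdisj (Set.toFinite _) (Set.toFinite _), ncard_X, ncard_nbhd hn]

lemma exists_ne_of_two_le (hn : 2 ≤ n) (i : Fin n) : ∃ j : Fin n, j ≠ i := by
  have : 1 < Fintype.card (Fin n) := by simp; omega
  exact Fintype.exists_ne_of_one_lt_card this i

lemma flip_ne_not (hn : 2 ≤ n) (y : Fin n → Bool) (i : Fin n) :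
    flip y i ≠ fun j => !y j := by
  intro h
  obtain ⟨j, hj⟩ := exists_ne_of_two_le hn i
  have := congrFun h j
  rw [flip_apply_ne _ hj] at this
  simp at this

lemma neighborSet_eq (hn : 0 < n) (v : HVert n) :
    (HCN n).neighborSet v
      = (fun i => ((v.1, flip v.2 i) : HVert n)) '' Set.univ ∪ {cross v} := by
  ext w
  rw [SimpleGraph.mem_neighborSet, adj_iff hn]
  constructor
  · rintro (⟨h1, i, h2⟩ | rfl)
    · left
      exact ⟨i, trivial, by dsimp only; rw [← h2, h1]⟩
    · right; rfl
  · rintro (⟨i, -, rfl⟩ | hw)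
    · exact Or.inl ⟨rfl, i, rfl⟩
    · exact Or.inr hw

lemma degree_eq (hn : 0 < n) (v : HVert n) :
    ((HCN n).neighborSet v).ncard = n + 1 := by
  rw [neighborSet_eq hn v]
  have hinj : Function.Injective (fun i => ((v.1, flip v.2 i) : HVert n)) := by
    intro i j h
    exact flip_inj (congrArg Prod.snd h)
  have hdisj : Disjoint ((fun i => ((v.1, flip v.2 i) : HVert n)) '' Set.univ)
      ({cross v} : Set (HVert n)) := by
    rw [Set.disjoint_right]
    rintro w rfl
    rintro ⟨i, -, hi⟩
    have h2 := congrArg Prod.fst hi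
    exact cross_fst_ne hn v h2.symm
  rw [Set.ncard_union_eq hdisj (Set.toFinite _) (Set.toFinite _),
    Set.ncard_image_of_injective _ hinj, Set.ncard_univ, Nat.card_eq_fintype_card,
    Fintype.card_fin, Set.ncard_singleton]

/-- The key bound: a vertex outside N[X] has at most 2 neighbors in N[X]. -/
lemma key_bound (hn2 : 2 ≤ n) {v : HVert n}
    (hv : v ∉ Xset x f S ∪ setNbhd n (Xset x f S)) :
    ((HCN n).neighborSet v ∩ (Xset x f S ∪ setNbhd n (Xset x f S))).ncard ≤ 2 := by
  have hn : 0 < n := by omega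
  have hvX : v ∉ Xset x f S := fun h => hv (Or.inl h)
  have hvN : v ∉ setNbhd n (Xset x f S) := fun h => hv (Or.inr h)
  -- no neighbor of v is in X
  have hnoX : ∀ w ∈ (HCN n).neighborSet v, w ∉ Xset x f S := by
    intro w hw hwX
    exact hvN ⟨hvX, w, hwX, hw.symm⟩
  rw [nbhd_eq hn]
  -- D membership forces first coordinate ≠ x, B' forces = x
  by_cases hv1 : v.1 = x
  · -- v is in cluster x
    have hcross : cross v ∉ Bset' x f S ∪ Dset x f S := by
      rintro (hc | hc)
      · exact cross_fst_ne hn v ((mem_B'_fst hc).trans hv1.symm)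
      · obtain ⟨u, hu, hcu⟩ := hc
        exact hvX (cross_injective hn hcu ▸ hu)
    set T := S.filter (fun i => v.2 i ≠ f i) with hT
    have hT0 : T.Nonempty := by
      rw [Finset.filter_nonempty_iff]
      by_contra hc
      push_neg at hc
      exact hvX ⟨hv1, fun i hi => hc i hi⟩
    have hT1 : T.card ≠ 1 := by
      intro hc
      rw [hT] at hc
      have hvB : v ∈ Bset' x f S := ⟨v.2, hc, by rw [← hv1]⟩
      have : v ∈ setNbhd n (Xset x f S) := by rw [nbhd_eq hn]; exact Or.inl hvB
      exact hvN this
    have hT2 : 2 ≤ T.card := by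
      have := Finset.card_pos.mpr hT0
      omega
    -- if a flip of v.2 is in B then the flipped coordinate is in T and T.card = 2
    have subclaim : ∀ i, flip v.2 i ∈ Bset f S → i ∈ T ∧ T.card = 2 := by
      intro i hi
      have hi' : (S.filter (fun j => flip v.2 i j ≠ f j)).card = 1 := hi
      by_cases hiS : i ∈ S
      · by_cases hifT : v.2 i = f i
        · exfalso
          have hsub : T ⊆ S.filter (fun j => flip v.2 i j ≠ f j) := by
            intro j hj
            rw [hT, Finset.mem_filter] at hj
            rw [Finset.mem_filter]
            have hji : j ≠ i := by
              rintro rfl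
              exact hj.2 hifT
            rw [flip_apply_ne _ hji]
            exact hj
          have := Finset.card_le_card hsub
          omega
        · have hiT : i ∈ T := by rw [hT, Finset.mem_filter]; exact ⟨hiS, hifT⟩
          have herase : S.filter (fun j => flip v.2 i j ≠ f j) = T.erase i := by
            ext j
            rw [Finset.mem_filter, Finset.mem_erase, hT, Finset.mem_filter]
            constructor
            · rintro ⟨hjS, hj⟩
              have hji : j ≠ i := by
                rintro rfl
                rw [flip_apply_self] at hj
                exact hj (by rw [bool_eq_not hifT, Bool.not_not])
              rw [flip_apply_ne _ hji] at hj
              exact ⟨hji, hjS, hj⟩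
            · rintro ⟨hji, hjS, hj⟩
              rw [flip_apply_ne _ hji]
              exact ⟨hjS, hj⟩
          rw [herase, Finset.card_erase_of_mem hiT] at hi'
          exact ⟨hiT, by omega⟩
      · exfalso
        have : S.filter (fun j => flip v.2 i j ≠ f j) = T := by
          ext j
          rw [Finset.mem_filter, hT, Finset.mem_filter]
          constructor
          · rintro ⟨hjS, hj⟩
            rw [flip_apply_ne _ (fun h => hiS (by rw [← h]; exact hjS))] at hj
            exact ⟨hjS, hj⟩
          · rintro ⟨hjS, hj⟩
            rw [flip_apply_ne _ (fun h => hiS (by rw [← h]; exact hjS))]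
            exact ⟨hjS, hj⟩
        rw [this] at hi'
        omega
    -- every element of the intersection is a within-cluster flip landing in B'
    have hmem : ∀ w ∈ (HCN n).neighborSet v ∩
        (Xset x f S ∪ (Bset' x f S ∪ Dset x f S)),
        ∃ i ∈ T, w = (x, flip v.2 i) := by
      rintro w ⟨hwN, hwF⟩
      rcases hwF with hwX | hwBD
      · exact absurd hwX (hnoX w hwN)
      rw [SimpleGraph.mem_neighborSet, adj_iff hn] at hwN
      rcases hwN with ⟨h1, i, h2⟩ | rfl
      · rcases hwBD with hwB | hwD
        · have : flip v.2 i ∈ Bset f S := h2 ▸ mem_B'_snd hwB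
          refine ⟨i, (subclaim i this).1, ?_⟩
          have : w = (w.1, w.2) := rfl
          rw [this, h2, ← h1, hv1]
        · exact absurd ((h1 ▸ hv1 : w.1 = x)) (mem_D_fst hn hwD)
      · exact absurd hwBD hcross
    by_cases hTc : T.card = 2
    · have hsub : (HCN n).neighborSet v ∩
          (Xset x f S ∪ (Bset' x f S ∪ Dset x f S))
          ⊆ (fun i => ((x, flip v.2 i) : HVert n)) '' ↑T := by
        intro w hw
        obtain ⟨i, hiT, rfl⟩ := hmem w hw
        exact ⟨i, hiT, rfl⟩
      calc ((HCN n).neighborSet v ∩ (Xset x f S ∪ (Bset' x f S ∪ Dset x f S))).ncard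
          ≤ ((fun i => ((x, flip v.2 i) : HVert n)) '' ↑T).ncard :=
            Set.ncard_le_ncard hsub (Set.toFinite _)
        _ ≤ (↑T : Set (Fin n)).ncard := Set.ncard_image_le (Set.toFinite _)
        _ = 2 := by rw [Set.ncard_coe_finset, hTc]
    · have : (HCN n).neighborSet v ∩ (Xset x f S ∪ (Bset' x f S ∪ Dset x f S)) = ∅ := by
        rw [Set.eq_empty_iff_forall_notMem]
        intro w hw
        obtain ⟨i, hiT, rfl⟩ := hmem w hw
        have hwB : flip v.2 i ∈ Bset f S := by
          rcases hw.2 with hwX | hwB | hwD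
          · exact absurd hwX (hnoX _ hw.1)
          · exact mem_B'_snd hwB
          · exact (mem_D_fst hn hwD rfl).elim
        exact hTc (subclaim i hwB).2
      rw [this, Set.ncard_empty]
      omega
  · -- v in another cluster
    have hwithin : ∀ w ∈ (HCN n).neighborSet v, w ∈ Bset' x f S ∪ Dset x f S →
        w ≠ cross v → w = (v.1, x) ∨ w = (v.1, fun i => !x i) := by
      intro w hwN hwBD hwc
      rw [SimpleGraph.mem_neighborSet, adj_iff hn] at hwN
      rcases hwN with ⟨h1, i, h2⟩ | rfl
      · rcases hwBD with hwB | hwD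
        · exact absurd ((mem_B'_fst hwB) ▸ h1 : v.1 = x) hv1
        · obtain ⟨u, hu, rfl⟩ := hwD
          have hu1 : u.1 = x := hu.1
          by_cases hu12 : u.1 = u.2
          · have hcu : cross u = (fun i => !u.1 i, fun i => !u.2 i) := by
              rw [cross, if_pos hu12]
            right
            rw [hcu] at h1 ⊢
            refine Prod.ext ?_ ?_ <;> dsimp only at h1 ⊢
            · exact h1.symm
            · rw [← hu12, hu1]
          · have hcu : cross u = (u.2, u.1) := by rw [cross, if_neg hu12]
            left
            rw [hcu] at h1 ⊢
            refine Prod.ext ?_ ?_ <;> dsimp only at h1 ⊢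
            · exact h1.symm
            · exact hu1
      · exact absurd rfl hwc
    by_cases hc : cross v ∈ Xset x f S ∪ (Bset' x f S ∪ Dset x f S)
    · -- crossing neighbor in F2: then it's the only neighbor in F2
      have hcB : cross v ∈ Bset' x f S := by
        rcases hc with hcX | hcB | hcD
        · exact absurd hcX (hnoX _ (by
            rw [SimpleGraph.mem_neighborSet, adj_iff hn]; exact Or.inr rfl))
        · exact hcB
        · obtain ⟨u, hu, hcu⟩ := hcD
          exact absurd (cross_injective hn hcu ▸ hu) hvX
      have hsub : (HCN n).neighborSet v ∩ (Xset x f S ∪ (Bset' x f S ∪ Dset x f S))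
          ⊆ {cross v} := by
        rintro w ⟨hwN, hwF⟩
        rcases hwF with hwX | hwBD
        · exact absurd hwX (hnoX w hwN)
        by_contra hwc
        simp only [Set.mem_singleton_iff] at hwc
        rcases hwithin w hwN hwBD hwc with rfl | rfl
        · -- w = (v.1, x); show impossible since cross v ∈ B'
          rw [SimpleGraph.mem_neighborSet, adj_iff hn] at hwN
          rcases hwN with ⟨-, i, h2⟩ | hcc
          · -- x = flip v.2 i and cross v ∈ B' forces v.2 ∈ {x-based}
            -- analyze cross v
            have h1x : (cross v).1 = x := mem_B'_fst hcB
            rw [cross] at h1x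
            by_cases hv12 : v.1 = v.2
            · rw [if_pos hv12] at h1x
              have h1x' : (fun i => !v.1 i) = x := h1x
              have hv2 : v.2 = fun j => !x j := by
                funext j
                have hj := congrFun h1x' j
                rw [← hv12]
                cases hxj : x j <;> cases hvj : v.1 j <;> simp_all
              have h2' : x = flip v.2 i := h2
              rw [hv2] at h2'
              apply flip_ne_not hn2 (fun j => !x j) i
              funext j
              rw [← congrFun h2' j, Bool.not_not]
            · rw [if_neg hv12] at h1x
              have hv2x : v.2 = x := h1x
              have h2' : x = flip v.2 i := h2
              rw [hv2x] at h2'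
              exact flip_ne x i h2'.symm
          · -- (v.1, x) = cross v contradicts hwc
            exact hwc hcc
        · -- w = (v.1, fun i => !x i)
          rw [SimpleGraph.mem_neighborSet, adj_iff hn] at hwN
          rcases hwN with ⟨-, i, h2⟩ | hcc
          · have h1x : (cross v).1 = x := mem_B'_fst hcB
            rw [cross] at h1x
            by_cases hv12 : v.1 = v.2
            · rw [if_pos hv12] at h1x
              have h1x' : (fun i => !v.1 i) = x := h1x
              have hv2 : v.2 = fun j => !x j := by
                funext j
                have hj := congrFun h1x' j
                rw [← hv12]
                cases hxj : x j <;> cases hvj : v.1 j <;> simp_all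
              have h2' : (fun j => !x j) = flip v.2 i := h2
              rw [← hv2] at h2'
              exact flip_ne v.2 i h2'.symm
            · rw [if_neg hv12] at h1x
              have hv2x : v.2 = x := h1x
              have h2' : (fun j => !x j) = flip v.2 i := h2
              rw [hv2x] at h2'
              exact flip_ne_not hn2 x i h2'.symm
          · exact hwc hcc
      calc ((HCN n).neighborSet v ∩ (Xset x f S ∪ (Bset' x f S ∪ Dset x f S))).ncard
          ≤ ({cross v} : Set (HVert n)).ncard := Set.ncard_le_ncard hsub (Set.toFinite _)
        _ = 1 := Set.ncard_singleton _
        _ ≤ 2 := by omega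
    · -- crossing neighbor not in F2
      have hsub : (HCN n).neighborSet v ∩ (Xset x f S ∪ (Bset' x f S ∪ Dset x f S))
          ⊆ {((v.1, x) : HVert n), (v.1, fun i => !x i)} := by
        rintro w ⟨hwN, hwF⟩
        rcases hwF with hwX | hwBD
        · exact absurd hwX (hnoX w hwN)
        have hwc : w ≠ cross v := by
          rintro rfl
          exact hc (Or.inr hwBD)
        rcases hwithin w hwN hwBD hwc with rfl | rfl
        · exact Or.inl rfl
        · exact Or.inr rfl
      calc ((HCN n).neighborSet v ∩ (Xset x f S ∪ (Bset' x f S ∪ Dset x f S))).ncard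
          ≤ ({((v.1, x) : HVert n), (v.1, fun i => !x i)} : Set (HVert n)).ncard :=
            Set.ncard_le_ncard hsub (Set.toFinite _)
        _ ≤ 2 := Set.ncard_insert_le _ _ |>.trans (by rw [Set.ncard_singleton])

lemma ncard_compl (S : Finset (Fin n)) : ({j : Fin n | j ∉ S}).ncard = n - S.card := by
  classical
  rw [Set.ncard_eq_toFinset_card']
  have h : {j : Fin n | j ∉ S}.toFinset = Sᶜ := by ext j; simp
  rw [h, Finset.card_compl, Fintype.card_fin]

lemma good_F2 {g : ℕ} (hn2 : 2 ≤ n) (hg : g ≤ n - 1) :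
    ∀ v ∉ Xset x f S ∪ setNbhd n (Xset x f S),
      g ≤ (((HCN n).neighborSet v) \ (Xset x f S ∪ setNbhd n (Xset x f S))).ncard := by
  intro v hv
  have hb := key_bound hn2 hv
  have hd := degree_eq (by omega : 0 < n) v
  have heq : (HCN n).neighborSet v \ (Xset x f S ∪ setNbhd n (Xset x f S))
      = (HCN n).neighborSet v
        \ ((HCN n).neighborSet v ∩ (Xset x f S ∪ setNbhd n (Xset x f S))) :=
    (Set.diff_self_inter).symm
  rw [heq, Set.ncard_diff Set.inter_subset_left (Set.toFinite _), hd]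
  omega

lemma good_F1 {g : ℕ} (hn2 : 2 ≤ n) (hg : g ≤ n - 1) (hS : S.card = n - g) :
    ∀ v ∉ setNbhd n (Xset x f S),
      g ≤ (((HCN n).neighborSet v) \ setNbhd n (Xset x f S)).ncard := by
  intro v hv
  have hn : 0 < n := by omega
  by_cases hvX : v ∈ Xset x f S
  · have hsub : (fun j => ((x, flip v.2 j) : HVert n)) '' {j : Fin n | j ∉ S}
        ⊆ (HCN n).neighborSet v \ setNbhd n (Xset x f S) := by
      rintro w ⟨j, hj, rfl⟩
      have hwX : ((x, flip v.2 j) : HVert n) ∈ Xset x f S := by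
        refine ⟨rfl, fun i hi => ?_⟩
        show flip v.2 j i = f i
        rw [flip_apply_ne _ (fun h => hj (by rw [← h]; exact hi))]
        exact hvX.2 i hi
      constructor
      · rw [SimpleGraph.mem_neighborSet, adj_iff hn]
        exact Or.inl ⟨hvX.1, j, rfl⟩
      · intro hw
        rw [nbhd_eq hn] at hw
        rcases hw with h | h
        · exact Set.disjoint_left.mp disj_X_B' hwX h
        · exact Set.disjoint_left.mp (disj_X_D hn) hwX h
    have hinj : Function.Injective (fun j => ((x, flip v.2 j) : HVert n)) :=
      fun a b h => flip_inj (congrArg Prod.snd h)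
    have hcard := Set.ncard_le_ncard hsub (Set.toFinite _)
    rw [Set.ncard_image_of_injective _ hinj, ncard_compl] at hcard
    omega
  · have hvF2 : v ∉ Xset x f S ∪ setNbhd n (Xset x f S) := by
      rintro (h | h)
      exacts [hvX h, hv h]
    refine le_trans (good_F2 hn2 hg v hvF2) (Set.ncard_le_ncard ?_ (Set.toFinite _))
    exact Set.diff_subset_diff_right Set.subset_union_right

end Main
end HCNaux


/-- For a subcube X of a cluster of HCN_n inducing Q_g (1 ≤ g ≤ n-1),
F₁ = N(X) and F₂ = N[X] are distinct g-good-neighbor faulty sets with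
|F₁| = 2^g(n+1-g), |F₂| = 2^g(n+2-g), and there is no edge between
V \ (F₁ ∪ F₂) and F₁ Δ F₂. -/
theorem stmt_12 (n g : ℕ) (hn : 2 ≤ n) (hg1 : 1 ≤ g) (hg2 : g ≤ n - 1)
    (X : Set (HVert n)) (hX : IsClusterSubcube n g X)
    (F1 F2 : Set (HVert n)) (hF1 : F1 = setNbhd n X) (hF2 : F2 = X ∪ setNbhd n X) :
    F1 ≠ F2 ∧ GoodNbrSet n g F1 ∧ GoodNbrSet n g F2 ∧
    F1.ncard = 2 ^ g * (n + 1 - g) ∧ F2.ncard = 2 ^ g * (n + 2 - g) ∧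
    ∀ u ∉ F1 ∪ F2, ∀ v ∈ symmDiff F1 F2, ¬ (HCN n).Adj u v := by
  obtain ⟨x, S, f, hS, hXeq⟩ := hX
  have hn0 : 0 < n := by omega
  have hXX : X = HCNaux.Xset x f S := hXeq
  subst hF1 hF2 hXX
  have hgn : g ≤ n := by omega
  refine ⟨?_, ?_, ?_, ?_, ?_, ?_⟩
  · -- F1 ≠ F2
    intro h
    have hv0 : ((x, f) : HVert n) ∈ HCNaux.Xset x f S := ⟨rfl, fun i _ => rfl⟩
    have : ((x, f) : HVert n) ∈ setNbhd n (HCNaux.Xset x f S) := by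
      rw [h]
      exact Or.inl hv0
    exact this.1 hv0
  · exact HCNaux.good_F1 hn hg2 hS
  · exact HCNaux.good_F2 hn hg2
  · rw [HCNaux.ncard_nbhd hn0, hS]
    have e0 : n - (n - g) = g := by omega
    have e2 : n + 1 - g = (n - g) + 1 := by omega
    rw [e0, e2]; ring
  · rw [HCNaux.ncard_closed_nbhd hn0, hS]
    have e0 : n - (n - g) = g := by omega
    have e2 : n + 2 - g = (n - g) + 2 := by omega
    rw [e0, e2]; ring
  · intro u hu v hv hadj
    have hsub : setNbhd n (HCNaux.Xset x f S)
        ⊆ HCNaux.Xset x f S ∪ setNbhd n (HCNaux.Xset x f S) := Set.subset_union_right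
    rw [symmDiff_of_le hsub] at hv
    have hvX : v ∈ HCNaux.Xset x f S := by
      rcases hv.1 with h | h
      · exact h
      · exact absurd h hv.2
    have huX : u ∉ HCNaux.Xset x f S := fun h => hu (Or.inr (Or.inl h))
    exact hu (Or.inl ⟨huX, v, hvX, hadj.symm⟩)
end

section
/- For n ≥ 2 and 1 ≤ g ≤ n−1, if F₁ and F₂ are two g-good-neighbor faulty sets of HCN_n each of size at most 2^g(n+2−g) − 1, then F₁ ∪ F₂ ≠ V(HCN_n). -/
/-- For n ≥ 2 and 1 ≤ g ≤ n-1, two g-good-neighbor faulty sets of HCN_n of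
size at most 2^g(n+2-g) - 1 cannot cover all the vertices. -/
theorem stmt_13 (n g : ℕ) (hn : 2 ≤ n) (hg1 : 1 ≤ g) (hg2 : g ≤ n - 1)
    (F1 F2 : Set (HVert n)) (h1 : GoodNbrSet n g F1) (h2 : GoodNbrSet n g F2)
    (hc1 : F1.ncard ≤ 2 ^ g * (n + 2 - g) - 1)
    (hc2 : F2.ncard ≤ 2 ^ g * (n + 2 - g) - 1) :
    F1 ∪ F2 ≠ Set.univ := by
  intro h
  have hcard : (Set.univ : Set (HVert n)).ncard = 2 ^ n * 2 ^ n := by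
    rw [Set.ncard_univ, Nat.card_eq_fintype_card]
    simp [HVert, Fintype.card_prod]
  have hle : (Set.univ : Set (HVert n)).ncard ≤ F1.ncard + F2.ncard := by
    rw [← h]; exact Set.ncard_union_le F1 F2
  rw [hcard] at hle
  have hgn : 2 ^ g ≤ 2 ^ (n - 1) := Nat.pow_le_pow_right (by norm_num) hg2
  have hsub : n + 2 - g ≤ n + 1 := by omega
  have hX : 2 ^ g * (n + 2 - g) ≤ 2 ^ (n - 1) * (n + 1) := Nat.mul_le_mul hgn hsub
  have h2n : 2 * 2 ^ (n - 1) = 2 ^ n := by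
    rw [← pow_succ']; congr 1; omega
  have hn2 : n + 1 ≤ 2 ^ n := Nat.lt_two_pow_self
  have hX1 : 1 ≤ 2 ^ g * (n + 2 - g) :=
    Nat.mul_pos (Nat.two_pow_pos g) (by omega)
  have e1 : F1.ncard + F2.ncard ≤ 2 * (2 ^ g * (n + 2 - g)) - 2 := by omega
  have e2 : 2 * (2 ^ g * (n + 2 - g)) ≤ 2 ^ n * (n + 1) := by
    calc 2 * (2 ^ g * (n + 2 - g)) ≤ 2 * (2 ^ (n - 1) * (n + 1)) :=
          Nat.mul_le_mul_left _ hX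
      _ = 2 ^ n * (n + 1) := by rw [← mul_assoc, h2n]
  have e3 : 2 ^ n * (n + 1) ≤ 2 ^ n * 2 ^ n := Nat.mul_le_mul_left _ hn2
  have hpos : 0 < 2 ^ n * 2 ^ n :=
    Nat.mul_pos (Nat.two_pow_pos n) (Nat.two_pow_pos n)
  omega
end

section
/- For n ≥ 2 and 1 ≤ g ≤ n−1, if F₁ and F₂ are two distinct g-good-neighbor faulty sets of HCN_n each of size at most 2^g(n+2−g) − 1, then there exists an edge of HCN_n between V(HCN_n) \ (F₁ ∪ F₂) and the symmetric difference F₁ Δ F₂. -/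
namespace HCNP

variable {ι : Type} [Fintype ι] [DecidableEq ι]
set_option linter.unusedSectionVars false



/-- hypercube adjacency -/
def qadj (x y : ι → Bool) : Prop :=
  (Finset.univ.filter (fun i => x i ≠ y i)).card = 1

instance : DecidablePred (fun p : (ι → Bool) × (ι → Bool) => qadj p.1 p.2) := by
  unfold qadj; infer_instance


lemma qadj_symm {x y : ι → Bool} (h : qadj x y) : qadj y x := by
  unfold qadj at *
  rw [← h]
  congr 1
  apply Finset.filter_congr
  intro i _
  simp [ne_comm]

lemma qadj_irrefl (x : ι → Bool) : ¬ qadj x x := by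
  unfold qadj; simp

lemma qadj_ne {x y : ι → Bool} (h : qadj x y) : x ≠ y := by
  rintro rfl; exact qadj_irrefl x h

lemma qadj_update (x : ι → Bool) (i : ι) : qadj x (Function.update x i (!x i)) := by
  unfold qadj
  have : (Finset.univ.filter (fun j => x j ≠ Function.update x i (!x i) j)) = {i} := by
    ext j
    simp only [Finset.mem_filter, Finset.mem_univ, true_and, Finset.mem_singleton]
    rcases eq_or_ne j i with rfl | hj
    · simp
    · simp [Function.update_of_ne hj, hj]
  rw [this]; simp

lemma qadj_iff_update {x y : ι → Bool} :
    qadj x y ↔ ∃ i, y = Function.update x i (!x i) := by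
  constructor
  · intro h
    unfold qadj at h
    rw [Finset.card_eq_one] at h
    obtain ⟨i, hi⟩ := h
    refine ⟨i, funext fun j => ?_⟩
    rcases eq_or_ne j i with rfl | hj
    · have : j ∈ Finset.univ.filter (fun i => x i ≠ y i) := by rw [hi]; simp
      simp only [Finset.mem_filter] at this
      simp only [Function.update_self]
      have hne : x j ≠ y j := this.2
      rcases Bool.eq_false_or_eq_true (x j) with h' | h' <;> rw [h'] at hne ⊢ <;>
        simp at hne ⊢ <;> simp [hne]
    · have : j ∉ Finset.univ.filter (fun i => x i ≠ y i) := by rw [hi]; simpa using hj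
      simp only [Finset.mem_filter, Finset.mem_univ, true_and, not_not] at this
      simp [Function.update_of_ne hj, ← this]
  · rintro ⟨i, rfl⟩; exact qadj_update x i

/-- closed neighborhood -/
def qball (T : Set (ι → Bool)) : Set (ι → Bool) :=
  T ∪ {y | ∃ x ∈ T, qadj x y}

lemma subset_qball (T : Set (ι → Bool)) : T ⊆ qball T := Set.subset_union_left

lemma qball_mono {T S : Set (ι → Bool)} (h : T ⊆ S) : qball T ⊆ qball S := by
  rintro y (hy | ⟨x, hx, hxy⟩)
  · exact Or.inl (h hy)
  · exact Or.inr ⟨x, h hx, hxy⟩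

/-- min-degree condition -/
def mindeg (g : ℕ) (T : Set (ι → Bool)) : Prop :=
  ∀ x ∈ T, g ≤ {y ∈ T | qadj x y}.ncard

lemma ball_singleton (x : ι → Bool) : qball ({x} : Set (ι → Bool)) =
    insert x ((fun i => Function.update x i (!x i)) '' Set.univ) := by
  ext y
  simp only [qball, Set.mem_union, Set.mem_singleton_iff, Set.mem_setOf_eq, Set.mem_insert_iff,
    Set.mem_image, Set.mem_univ, true_and]
  constructor
  · rintro (rfl | ⟨x', rfl, h⟩)
    · exact Or.inl rfl
    · rcases qadj_iff_update.1 h with ⟨i, rfl⟩; exact Or.inr ⟨i, rfl⟩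
  · rintro (rfl | ⟨i, rfl⟩)
    · exact Or.inl rfl
    · exact Or.inr ⟨x, rfl, qadj_update x i⟩

lemma update_flip_injective (x : ι → Bool) :
    Function.Injective (fun i => Function.update x i (!x i)) := by
  intro i j h
  by_contra hij
  have := congrFun h i
  simp only [Function.update_self, Function.update_of_ne hij] at this
  exact absurd this (Bool.not_ne_self (x i))

lemma ncard_ball_singleton (x : ι → Bool) :
    (qball ({x} : Set (ι → Bool))).ncard = Fintype.card ι + 1 := by
  rw [ball_singleton]
  rw [Set.ncard_insert_of_notMem, Set.ncard_image_of_injective _ (update_flip_injective x)]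
  · simp [Set.ncard_univ]
  · rintro ⟨i, -, h⟩
    have := congrFun h i
    simp only [Function.update_self] at this
    exact absurd this (Bool.not_ne_self (x i))

lemma diff_pair {x y w : ι → Bool} (hxy : x ≠ y) (h1 : qadj x w) (h2 : qadj y w) :
    (Finset.univ.filter (fun i => x i ≠ y i)).card = 2 ∧
      ∃ i, (x i ≠ y i) ∧ w = Function.update x i (!x i) := by
  obtain ⟨i, rfl⟩ := qadj_iff_update.1 h1
  obtain ⟨j, hj⟩ := qadj_iff_update.1 h2
  have hij : i ≠ j := by
    rintro rfl
    apply hxy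
    funext l
    rcases eq_or_ne l i with rfl | hl
    · have := congrFun hj l
      simp only [Function.update_self] at this
      have h1 := this
      rcases Bool.eq_false_or_eq_true (x l) with h' | h' <;>
        rcases Bool.eq_false_or_eq_true (y l) with h'' | h'' <;> simp_all
    · have := congrFun hj l
      simp only [Function.update_of_ne hl] at this
      exact this
  have hset : (Finset.univ.filter (fun l => x l ≠ y l)) = {i, j} := by
    ext l
    simp only [Finset.mem_filter, Finset.mem_univ, true_and, Finset.mem_insert,
      Finset.mem_singleton]
    constructor
    · intro hl
      by_contra hc
      push_neg at hc
      apply hl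
      have e1 := congrFun hj l
      simp only [Function.update_of_ne hc.1, Function.update_of_ne hc.2] at e1
      exact e1
    · rintro (rfl | rfl)
      · have e1 := congrFun hj l
        simp only [Function.update_self, Function.update_of_ne hij] at e1
        rw [← e1]
        exact (Bool.not_ne_self (x l)).symm
      · have e1 := congrFun hj l
        simp only [Function.update_self, Function.update_of_ne (Ne.symm hij)] at e1
        intro hc
        rw [hc] at e1
        exact (Bool.not_ne_self (y l)) e1.symm
  constructor
  · rw [hset, Finset.card_insert_of_notMem (by simpa using hij), Finset.card_singleton]
  · refine ⟨i, ?_, rfl⟩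
    have : i ∈ Finset.univ.filter (fun l => x l ≠ y l) := by rw [hset]; simp
    simpa using this

-- ===== splitting machinery =====
def ext (i : ι) (b : Bool) (x : {j : ι // j ≠ i} → Bool) : ι → Bool :=
  fun j => if h : j = i then b else x ⟨j, h⟩

lemma ext_self (i : ι) (b : Bool) (x : {j : ι // j ≠ i} → Bool) : ext i b x i = b :=
  dif_pos rfl

lemma ext_ne (i : ι) (b : Bool) (x : {j : ι // j ≠ i} → Bool) (j : {j : ι // j ≠ i}) :
    ext i b x j.1 = x j := by
  simp only [ext, dif_neg j.2]

def res (i : ι) (x : ι → Bool) : {j : ι // j ≠ i} → Bool := fun j => x j.1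

lemma ext_res {i : ι} {b : Bool} {x : ι → Bool} (h : x i = b) : ext i b (res i x) = x := by
  funext j
  by_cases hj : j = i
  · subst hj; rw [ext_self, h]
  · exact ext_ne i b (res i x) ⟨j, hj⟩

lemma res_ext (i : ι) (b : Bool) (x : {j : ι // j ≠ i} → Bool) : res i (ext i b x) = x := by
  funext j; exact ext_ne i b x j

lemma ext_injective (i : ι) (b : Bool) : Function.Injective (ext i b) := by
  intro x y h
  have : res i (ext i b x) = res i (ext i b y) := by rw [h]
  rwa [res_ext, res_ext] at this

lemma card_filter_split (i : ι) (x y : ι → Bool) :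
    (Finset.univ.filter fun j => x j ≠ y j).card
      = (if x i ≠ y i then 1 else 0)
        + (Finset.univ.filter fun j : {j : ι // j ≠ i} => x j.1 ≠ y j.1).card := by
  rw [Finset.card_filter, Finset.card_filter]
  rw [← Finset.add_sum_erase _ _ (Finset.mem_univ i)]
  congr 1
  rw [Finset.sum_subtype (p := fun j => j ≠ i) (Finset.univ.erase i)
    (fun x => by simp [Finset.mem_erase]) (fun j => if x j ≠ y j then 1 else 0)]

lemma qadj_ext_iff {i : ι} {b c : Bool} {u v : {j : ι // j ≠ i} → Bool} :
    qadj (ext i b u) (ext i c v) ↔ (b = c ∧ qadj u v) ∨ (b ≠ c ∧ u = v) := by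
  unfold qadj
  rw [card_filter_split i]
  have h1 : ∀ j : {j : ι // j ≠ i}, (ext i b u j.1 ≠ ext i c v j.1) = (u j ≠ v j) := by
    intro j; rw [ext_ne, ext_ne]
  have h2 : (Finset.univ.filter fun j : {j : ι // j ≠ i} => ext i b u j.1 ≠ ext i c v j.1)
      = (Finset.univ.filter fun j => u j ≠ v j) := by
    apply Finset.filter_congr; intro j _; rw [h1]
  rw [h2, ext_self, ext_self]
  rcases eq_or_ne b c with rfl | hbc
  · simp
  · rw [if_pos hbc]
    constructor
    · intro h
      have : (Finset.univ.filter fun j : {j : ι // j ≠ i} => u j ≠ v j).card = 0 := by omega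
      rw [Finset.card_eq_zero, Finset.filter_eq_empty_iff] at this
      refine Or.inr ⟨hbc, funext fun j => ?_⟩
      have := this (Finset.mem_univ j)
      simpa using this
    · rintro (⟨h, -⟩ | ⟨-, rfl⟩)
      · exact absurd h hbc
      · rw [Finset.filter_false_of_mem (fun j _ => by simp), Finset.card_empty]

def slice (i : ι) (b : Bool) (T : Set (ι → Bool)) : Set ({j : ι // j ≠ i} → Bool) :=
  {x | ext i b x ∈ T}

lemma ncard_split (i : ι) (T : Set (ι → Bool)) :
    T.ncard = (slice i false T).ncard + (slice i true T).ncard := by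
  have hT : T = (ext i false '' slice i false T) ∪ (ext i true '' slice i true T) := by
    ext w
    constructor
    · intro hw
      rcases Bool.eq_false_or_eq_true (w i) with hb | hb
      · refine Or.inr ⟨res i w, ?_, ext_res hb⟩
        show ext i true (res i w) ∈ T
        rw [ext_res hb]; exact hw
      · refine Or.inl ⟨res i w, ?_, ext_res hb⟩
        show ext i false (res i w) ∈ T
        rw [ext_res hb]; exact hw
    · rintro (⟨x, hx, rfl⟩ | ⟨x, hx, rfl⟩) <;> exact hx
  conv_lhs => rw [hT]
  rw [Set.ncard_union_eq ?dis (Set.toFinite _) (Set.toFinite _),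
    Set.ncard_image_of_injective _ (ext_injective i false),
    Set.ncard_image_of_injective _ (ext_injective i true)]
  case dis =>
    rw [Set.disjoint_left]
    rintro w ⟨x, -, rfl⟩ ⟨y, -, hy⟩
    have := congrFun hy i
    rw [ext_self, ext_self] at this
    simp at this

lemma slice_nonempty {i : ι} {T : Set (ι → Bool)} {x : ι → Bool} (hx : x ∈ T) :
    res i x ∈ slice i (x i) T := by
  simp only [slice, Set.mem_setOf_eq, ext_res rfl]
  exact hx

lemma qball_slice (i : ι) (b : Bool) (T : Set (ι → Bool)) :
    qball (slice i b T) ⊆ slice i b (qball T) := by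
  rintro y (hy | ⟨x, hx, hxy⟩)
  · exact Or.inl hy
  · refine Or.inr ⟨ext i b x, hx, ?_⟩
    rw [qadj_ext_iff]
    exact Or.inl ⟨rfl, hxy⟩

lemma mindeg_slice {g : ℕ} {T : Set (ι → Bool)} (h : mindeg g T) (i : ι) (b : Bool) :
    mindeg (g - 1) (slice i b T) := by
  intro v hv
  have hu : ext i b v ∈ T := hv
  have hN := h _ hu
  set N := {y ∈ T | qadj (ext i b v) y} with hNdef
  have hsub : N ⊆ insert (ext i (!b) v) ((ext i b) '' {w ∈ slice i b T | qadj v w}) := by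
    rintro y ⟨hyT, hyadj⟩
    rcases Bool.eq_false_or_eq_true (y i) with hb | hb <;>
    · rw [← ext_res hb] at hyadj hyT ⊢
      rw [qadj_ext_iff] at hyadj
      rcases hyadj with ⟨rfl, hadj⟩ | ⟨hne, rfl⟩
      · exact Set.mem_insert_iff.2 (Or.inr ⟨res i y, ⟨hyT, hadj⟩, rfl⟩)
      · apply Set.mem_insert_iff.2 (Or.inl ?_)
        congr 1
        cases b <;> simp_all
  have h1 : N.ncard ≤ 1 + {w ∈ slice i b T | qadj v w}.ncard := by
    calc N.ncard ≤ (insert (ext i (!b) v) ((ext i b) '' {w ∈ slice i b T | qadj v w})).ncard :=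
          Set.ncard_le_ncard hsub (Set.toFinite _)
    _ ≤ 1 + ((ext i b) '' {w ∈ slice i b T | qadj v w}).ncard := by
          rw [add_comm]; exact Set.ncard_insert_le _ _
    _ = 1 + {w ∈ slice i b T | qadj v w}.ncard := by
          rw [Set.ncard_image_of_injective _ (ext_injective i b)]
  omega

lemma mindeg_exists_pair {g : ℕ} {T : Set (ι → Bool)} (h : mindeg (g+1) T)
    (hne : T.Nonempty) : ∃ x ∈ T, ∃ y ∈ T, x ≠ y := by
  obtain ⟨x, hx⟩ := hne
  have := h x hx
  have hpos : 0 < {y ∈ T | qadj x y}.ncard := by omega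
  rw [Set.ncard_pos (Set.toFinite _)] at hpos
  obtain ⟨y, hyT, hyadj⟩ := hpos
  exact ⟨x, hx, y, hyT, qadj_ne hyadj⟩

lemma card_subtype_ne (i : ι) : Fintype.card {j : ι // j ≠ i} + 1 = Fintype.card ι := by
  have : Fintype.card {j : ι // j ≠ i} = Fintype.card ι - 1 := by
    rw [Fintype.card_subtype_compl, Fintype.card_subtype_eq]
  have hpos : 0 < Fintype.card ι := Fintype.card_pos_iff.2 ⟨i⟩
  omega

-- ===== SIZE lemma =====
lemma size_lemma : ∀ (g : ℕ) {ι : Type} [Fintype ι] [DecidableEq ι]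
    (T : Set (ι → Bool)), T.Nonempty → mindeg g T → 2^g ≤ T.ncard := by
  intro g
  induction g with
  | zero =>
    intro ι _ _ T hne _
    simpa [Nat.one_le_iff_ne_zero, Nat.pos_iff_ne_zero] using (Set.ncard_pos (Set.toFinite _)).2 hne
  | succ g IH =>
    intro ι _ _ T hne hdeg
    obtain ⟨x, hx, y, hy, hxy⟩ := mindeg_exists_pair hdeg hne
    obtain ⟨i, hi⟩ : ∃ i, x i ≠ y i := by
      by_contra hc
      push_neg at hc
      exact hxy (funext hc)
    have hx' : res i x ∈ slice i (x i) T := slice_nonempty hx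
    have hy' : res i y ∈ slice i (y i) T := slice_nonempty hy
    obtain ⟨hfalse, htrue⟩ : (slice i false T).Nonempty ∧ (slice i true T).Nonempty := by
      cases hxb : x i <;> cases hyb : y i <;> rw [hxb] at hx' <;> rw [hyb] at hy'
      · rw [hxb, hyb] at hi; exact absurd rfl hi
      · exact ⟨⟨_, hx'⟩, ⟨_, hy'⟩⟩
      · exact ⟨⟨_, hy'⟩, ⟨_, hx'⟩⟩
      · rw [hxb, hyb] at hi; exact absurd rfl hi
    have d1 : mindeg g (slice i false T) := by
      have := mindeg_slice hdeg i false; simpa using this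
    have d2 : mindeg g (slice i true T) := by
      have := mindeg_slice hdeg i true; simpa using this
    have := IH _ hfalse d1
    have := IH _ htrue d2
    rw [ncard_split i T]
    rw [pow_succ]
    omega

-- ===== the closed-neighborhood isoperimetric bound =====
lemma qsb : ∀ (g : ℕ) {ι : Type} [Fintype ι] [DecidableEq ι]
    (T : Set (ι → Bool)), T.Nonempty → mindeg g T →
    min (2 ^ (Fintype.card ι)) (2 ^ g * (Fintype.card ι + 1 - g)) ≤ (qball T).ncard := by
  intro g
  induction g with
  | zero =>
    intro ι _ _ T hne _
    obtain ⟨x, hx⟩ := hne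
    calc min (2 ^ Fintype.card ι) (2 ^ 0 * (Fintype.card ι + 1 - 0))
        ≤ 2 ^ 0 * (Fintype.card ι + 1 - 0) := min_le_right _ _
      _ = Fintype.card ι + 1 := by omega
      _ = (qball ({x} : Set (ι → Bool))).ncard := (ncard_ball_singleton x).symm
      _ ≤ (qball T).ncard :=
          Set.ncard_le_ncard (qball_mono (Set.singleton_subset_iff.2 hx)) (Set.toFinite _)
  | succ g IH =>
    intro ι _ _ T hne hdeg
    obtain ⟨x, hx, y, hy, hxy⟩ := mindeg_exists_pair hdeg hne
    obtain ⟨i, hi⟩ : ∃ i, x i ≠ y i := by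
      by_contra hc; push_neg at hc; exact hxy (funext hc)
    have hx' : res i x ∈ slice i (x i) T := slice_nonempty hx
    have hy' : res i y ∈ slice i (y i) T := slice_nonempty hy
    obtain ⟨hfalse, htrue⟩ : (slice i false T).Nonempty ∧ (slice i true T).Nonempty := by
      cases hxb : x i <;> cases hyb : y i <;> rw [hxb] at hx' <;> rw [hyb] at hy'
      · rw [hxb, hyb] at hi; exact absurd rfl hi
      · exact ⟨⟨_, hx'⟩, ⟨_, hy'⟩⟩
      · exact ⟨⟨_, hy'⟩, ⟨_, hx'⟩⟩
      · rw [hxb, hyb] at hi; exact absurd rfl hi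
    have d1 : mindeg g (slice i false T) := by
      have := mindeg_slice hdeg i false; simpa using this
    have d2 : mindeg g (slice i true T) := by
      have := mindeg_slice hdeg i true; simpa using this
    have ih1 := IH _ hfalse d1
    have ih2 := IH _ htrue d2
    have hball : (qball (slice i false T)).ncard + (qball (slice i true T)).ncard
        ≤ (qball T).ncard := by
      rw [ncard_split i (qball T)]
      have l1 := Set.ncard_le_ncard (qball_slice i false T) (Set.toFinite _)
      have l2 := Set.ncard_le_ncard (qball_slice i true T) (Set.toFinite _)
      omega
    have hcard := card_subtype_ne i
    set cs := Fintype.card {j : ι // j ≠ i} with hcs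
    rw [← hcard]
    have e1 : 2 ^ (cs + 1) = 2 * 2 ^ cs := by rw [pow_succ]; ring
    have e2 : 2 ^ (g + 1) * ((cs + 1) + 1 - (g + 1)) = 2 * (2 ^ g * (cs + 1 - g)) := by
      rw [pow_succ]
      have : (cs + 1) + 1 - (g + 1) = cs + 1 - g := by omega
      rw [this]; ring
    rw [e1, e2]
    omega

-- ===== the two-point ball bound =====
lemma mem_qball_singleton {x w : ι → Bool} : w ∈ qball ({x} : Set (ι → Bool)) ↔ w = x ∨ qadj x w := by
  simp [qball]

lemma common_le_two {x y : ι → Bool} (hxy : x ≠ y) :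
    (qball ({x} : Set (ι → Bool)) ∩ qball ({y} : Set (ι → Bool))).ncard ≤ 2 := by
  by_cases hex : ∃ w, qadj x w ∧ qadj y w
  · obtain ⟨w0, hw0x, hw0y⟩ := hex
    have hcard2 := (diff_pair hxy hw0x hw0y).1
    have hsub : qball ({x} : Set (ι → Bool)) ∩ qball ({y} : Set (ι → Bool))
        ⊆ (fun i => Function.update x i (!x i)) '' ↑(Finset.univ.filter (fun i => x i ≠ y i)) := by
      rintro w ⟨hwx, hwy⟩
      rw [mem_qball_singleton] at hwx hwy
      rcases hwx with heq | hwx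
      · rw [heq] at hwy
        rcases hwy with heq2 | hwy
        · exact absurd heq2 hxy
        · exfalso
          have h1 : qadj x y := qadj_symm hwy
          unfold qadj at h1
          omega
      · rcases hwy with heq | hwy
        · rw [heq] at hwx
          exfalso
          unfold qadj at hwx
          omega
        · obtain ⟨-, i, hi, hw⟩ := diff_pair hxy hwx hwy
          exact ⟨i, by simpa using hi, hw.symm⟩
    calc (qball ({x} : Set (ι → Bool)) ∩ qball ({y} : Set (ι → Bool))).ncard
        ≤ _ := Set.ncard_le_ncard hsub (Set.toFinite _)
      _ ≤ (↑(Finset.univ.filter (fun i => x i ≠ y i)) : Set ι).ncard :=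
          Set.ncard_image_le (Set.toFinite _)
      _ = 2 := by rw [Set.ncard_coe_finset, hcard2]
  · push_neg at hex
    have hsub : qball ({x} : Set (ι → Bool)) ∩ qball ({y} : Set (ι → Bool)) ⊆ {x, y} := by
      rintro w ⟨hwx, hwy⟩
      rw [mem_qball_singleton] at hwx hwy
      rcases hwx with rfl | hwx
      · exact Or.inl rfl
      · rcases hwy with rfl | hwy
        · exact Or.inr rfl
        · exact absurd hwy (hex w hwx)
    calc _ ≤ ({x, y} : Set (ι → Bool)).ncard := Set.ncard_le_ncard hsub (Set.toFinite _)
      _ = 2 := Set.ncard_pair hxy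

lemma twoball {T : Set (ι → Bool)} {x y : ι → Bool} (hx : x ∈ T) (hy : y ∈ T)
    (hxy : x ≠ y) : 2 * Fintype.card ι ≤ (qball T).ncard := by
  have h1 : qball ({x} : Set (ι → Bool)) ⊆ qball T :=
    qball_mono (Set.singleton_subset_iff.2 hx)
  have h2 : qball ({y} : Set (ι → Bool)) ⊆ qball T :=
    qball_mono (Set.singleton_subset_iff.2 hy)
  have hu : qball ({x} : Set (ι → Bool)) ∪ qball ({y} : Set (ι → Bool)) ⊆ qball T :=
    Set.union_subset h1 h2
  have hie := Set.ncard_union_add_ncard_inter (qball ({x} : Set (ι → Bool)))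
    (qball ({y} : Set (ι → Bool))) (Set.toFinite _) (Set.toFinite _)
  have hle := Set.ncard_le_ncard hu (Set.toFinite _)
  have hi := common_le_two hxy
  rw [ncard_ball_singleton, ncard_ball_singleton] at hie
  omega

-- ============ HCN structural layer ============
section HCNStruct
variable {n : ℕ}

/-- the crossing partner -/
def pt (u : HVert n) : HVert n :=
  if u.1 = u.2 then (fun i => !u.1 i, fun i => !u.2 i) else (u.2, u.1)

lemma compl_ne (hn : 0 < n) (z : Fin n → Bool) : (fun i => !z i) ≠ z := by
  intro h
  have := congrFun h ⟨0, hn⟩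
  exact absurd this (Bool.not_ne_self _)

lemma compl_compl (z : Fin n → Bool) : (fun i => !(!z i)) = z := by
  funext i; simp

lemma pt_fst_ne (hn : 0 < n) (u : HVert n) : (pt u).1 ≠ u.1 := by
  unfold pt
  by_cases h : u.1 = u.2
  · rw [if_pos h]
    exact compl_ne hn u.1
  · rw [if_neg h]
    exact fun hc => h hc.symm

lemma pt_ne (hn : 0 < n) (u : HVert n) : pt u ≠ u := by
  intro h
  exact pt_fst_ne hn u (by rw [h])

lemma pt_pt (u : HVert n) : pt (pt u) = u := by
  unfold pt
  by_cases h : u.1 = u.2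
  · rw [if_pos h,
      if_pos (show ((fun i => !u.1 i, fun i => !u.2 i) : HVert n).1
          = ((fun i => !u.1 i, fun i => !u.2 i) : HVert n).2 by simp only; rw [h])]
    simp only
    rw [compl_compl, compl_compl]
  · rw [if_neg h,
      if_neg (show ¬(((u.2, u.1) : HVert n).1 = ((u.2, u.1) : HVert n).2) from
        fun hc => h hc.symm)]

lemma pt_injective : Function.Injective (pt (n := n)) := by
  intro u v h
  have : pt (pt u) = pt (pt v) := by rw [h]
  rwa [pt_pt, pt_pt] at this

lemma crel_iff (u v : HVert n) :
    ((u.1 ≠ u.2 ∧ v = (u.2, u.1)) ∨ (u.1 = u.2 ∧ v = (fun i => !u.1 i, fun i => !u.2 i)))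
      ↔ v = pt u := by
  unfold pt
  by_cases h : u.1 = u.2
  · rw [if_pos h]; simp [h]
  · rw [if_neg h]; simp [h]

lemma pt_eq_comm {u v : HVert n} : u = pt v ↔ v = pt u := by
  constructor <;> (rintro rfl; rw [pt_pt])

lemma hcn_adj_iff {u v : HVert n} :
    (HCN n).Adj u v ↔ u ≠ v ∧ ((u.1 = v.1 ∧ qadj u.2 v.2) ∨ v = pt u) := by
  rw [HCN, SimpleGraph.fromRel_adj]
  have h1 : ∀ a b : HVert n,
      ((a.1 = b.1 ∧ (Finset.univ.filter (fun i => a.2 i ≠ b.2 i)).card = 1) ∨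
        (a.1 ≠ a.2 ∧ b = (a.2, a.1)) ∨ (a.1 = a.2 ∧ b = (fun i => !a.1 i, fun i => !a.2 i)))
      ↔ ((a.1 = b.1 ∧ qadj a.2 b.2) ∨ b = pt a) := by
    intro a b
    constructor
    · rintro (h | h | h)
      · exact Or.inl h
      · exact Or.inr ((crel_iff a b).1 (Or.inl h))
      · exact Or.inr ((crel_iff a b).1 (Or.inr h))
    · rintro (h | h)
      · exact Or.inl h
      · rcases (crel_iff a b).2 h with h' | h'
        · exact Or.inr (Or.inl h')
        · exact Or.inr (Or.inr h')
  rw [h1, h1]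
  constructor
  · rintro ⟨hne, h | h⟩
    · exact ⟨hne, h⟩
    · refine ⟨hne, ?_⟩
      rcases h with ⟨he, hq⟩ | he
      · exact Or.inl ⟨he.symm, qadj_symm hq⟩
      · exact Or.inr (pt_eq_comm.1 he)
  · rintro ⟨hne, h⟩
    exact ⟨hne, Or.inl h⟩

lemma adj_pt (hn : 0 < n) (u : HVert n) : (HCN n).Adj u (pt u) :=
  hcn_adj_iff.2 ⟨(pt_ne hn u).symm, Or.inr rfl⟩

lemma adj_same_cluster {z : Fin n → Bool} {y y' : Fin n → Bool} (hn : 0 < n) :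
    (HCN n).Adj (z, y) (z, y') ↔ qadj y y' := by
  rw [hcn_adj_iff]
  constructor
  · rintro ⟨hne, ⟨-, hq⟩ | hq⟩
    · exact hq
    · exfalso
      exact pt_fst_ne hn (z, y) (by rw [← hq])
  · intro hq
    refine ⟨?_, Or.inl ⟨rfl, hq⟩⟩
    intro hc
    exact qadj_ne hq (congrArg Prod.snd hc)

lemma adj_structure {u v : HVert n} (h : (HCN n).Adj u v) :
    (v.1 = u.1 ∧ qadj u.2 v.2) ∨ v = pt u := by
  rcases hcn_adj_iff.1 h with ⟨-, ⟨he, hq⟩ | hq⟩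
  · exact Or.inl ⟨he.symm, hq⟩
  · exact Or.inr hq

/-- HCN min-degree within a set -/
def hmindeg (g : ℕ) (A : Set (HVert n)) : Prop :=
  ∀ v ∈ A, g ≤ {u ∈ A | (HCN n).Adj v u}.ncard

/-- the part of `A` in cluster `z`, as a subset of the cube -/
def clset (z : Fin n → Bool) (A : Set (HVert n)) : Set (Fin n → Bool) := {y | (z, y) ∈ A}

/-- embedding a cube set into cluster `z` -/
def emb (z : Fin n → Bool) (S : Set (Fin n → Bool)) : Set (HVert n) := (fun y => (z, y)) '' S

lemma emb_inj (z : Fin n → Bool) : Function.Injective (fun y : Fin n → Bool => (z, y)) := by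
  intro a b h; exact congrArg Prod.snd h

lemma ncard_emb (z : Fin n → Bool) (S : Set (Fin n → Bool)) : (emb z S).ncard = S.ncard :=
  Set.ncard_image_of_injective _ (emb_inj z)

lemma emb_clset_subset (z : Fin n → Bool) (A : Set (HVert n)) : emb z (clset z A) ⊆ A := by
  rintro v ⟨y, hy, rfl⟩; exact hy

lemma mem_emb {z : Fin n → Bool} {S : Set (Fin n → Bool)} {v : HVert n} :
    v ∈ emb z S ↔ v.1 = z ∧ v.2 ∈ S := by
  constructor
  · rintro ⟨y, hy, rfl⟩; exact ⟨rfl, hy⟩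
  · rintro ⟨h1, h2⟩; exact ⟨v.2, h2, by rw [← h1]⟩

lemma clset_mindeg {g : ℕ} {A : Set (HVert n)} (hA : hmindeg g A) (z : Fin n → Bool)
    (hn : 0 < n) : mindeg (g - 1) (clset z A) := by
  intro y hy
  have hv : (z, y) ∈ A := hy
  have hN := hA _ hv
  have hsub : {u ∈ A | (HCN n).Adj (z, y) u}
      ⊆ insert (pt (z, y)) ((fun y' => (z, y')) '' {w ∈ clset z A | qadj y w}) := by
    rintro u ⟨huA, huadj⟩
    rcases adj_structure huadj with ⟨he, hq⟩ | hq
    · have hez : u.1 = z := he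
      refine Set.mem_insert_iff.2 (Or.inr ⟨u.2, ⟨?_, hq⟩, ?_⟩)
      · show (z, u.2) ∈ A
        rw [← hez, Prod.mk.eta]
        exact huA
      · show (z, u.2) = u
        rw [← hez, Prod.mk.eta]
    · rw [hq]
      exact Set.mem_insert _ _
  have h1 : {u ∈ A | (HCN n).Adj (z, y) u}.ncard
      ≤ 1 + {w ∈ clset z A | qadj y w}.ncard := by
    calc {u ∈ A | (HCN n).Adj (z, y) u}.ncard
        ≤ (insert (pt (z, y)) ((fun y' => (z, y')) '' {w ∈ clset z A | qadj y w})).ncard :=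
          Set.ncard_le_ncard hsub (Set.toFinite _)
      _ ≤ 1 + ((fun y' => (z, y')) '' {w ∈ clset z A | qadj y w}).ncard := by
          rw [add_comm]; exact Set.ncard_insert_le _ _
      _ = 1 + {w ∈ clset z A | qadj y w}.ncard := by
          rw [Set.ncard_image_of_injective _ (emb_inj z)]
  omega

lemma clset_mindeg_full {g : ℕ} {A : Set (HVert n)} (hA : hmindeg g A) (z : Fin n → Bool)
    (hn : 0 < n) (hsub : ∀ v ∈ A, v.1 = z) : mindeg g (clset z A) := by
  intro y hy
  have hv : (z, y) ∈ A := hy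
  have hN := hA _ hv
  have hsub2 : {u ∈ A | (HCN n).Adj (z, y) u}
      ⊆ (fun y' => (z, y')) '' {w ∈ clset z A | qadj y w} := by
    rintro u ⟨huA, huadj⟩
    rcases adj_structure huadj with ⟨he, hq⟩ | hq
    · have hez : u.1 = z := he
      refine ⟨u.2, ⟨?_, hq⟩, ?_⟩
      · show (z, u.2) ∈ A
        rw [← hez, Prod.mk.eta]
        exact huA
      · show (z, u.2) = u
        rw [← hez, Prod.mk.eta]
    · exfalso
      have := hsub u huA
      rw [hq] at this
      exact pt_fst_ne hn (z, y) this
  have h1 := Set.ncard_le_ncard hsub2 (Set.toFinite _)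
  rw [Set.ncard_image_of_injective _ (emb_inj z)] at h1
  omega

/-- HCN size lemma -/
lemma hcn_size {g : ℕ} {A : Set (HVert n)} (hn : 0 < n) (hg : 1 ≤ g)
    (hne : A.Nonempty) (hA : hmindeg g A) : 2 ^ g ≤ A.ncard := by
  obtain ⟨v0, hv0⟩ := hne
  by_cases hone : ∀ v ∈ A, v.1 = v0.1
  · have hmd := clset_mindeg_full hA v0.1 hn hone
    have hne' : (clset v0.1 A).Nonempty := ⟨v0.2, by show (v0.1, v0.2) ∈ A; simpa using hv0⟩
    have := size_lemma g _ hne' hmd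
    calc 2 ^ g ≤ (clset v0.1 A).ncard := this
      _ = (emb v0.1 (clset v0.1 A)).ncard := (ncard_emb _ _).symm
      _ ≤ A.ncard := Set.ncard_le_ncard (emb_clset_subset _ _) (Set.toFinite _)
  · push_neg at hone
    obtain ⟨w, hw, hwne⟩ := hone
    have h1 : (clset v0.1 A).Nonempty := ⟨v0.2, by show (v0.1, v0.2) ∈ A; simpa using hv0⟩
    have h2 : (clset w.1 A).Nonempty := ⟨w.2, by show (w.1, w.2) ∈ A; simpa using hw⟩
    have m1 := clset_mindeg hA v0.1 hn
    have m2 := clset_mindeg hA w.1 hn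
    have s1 := size_lemma (g-1) _ h1 m1
    have s2 := size_lemma (g-1) _ h2 m2
    have hsub : emb v0.1 (clset v0.1 A) ∪ emb w.1 (clset w.1 A) ⊆ A :=
      Set.union_subset (emb_clset_subset _ _) (emb_clset_subset _ _)
    have hdisj : Disjoint (emb v0.1 (clset v0.1 A)) (emb w.1 (clset w.1 A)) := by
      rw [Set.disjoint_left]
      rintro v hv1 hv2
      rw [mem_emb] at hv1 hv2
      exact hwne (hv2.1.symm.trans hv1.1)
    have := Set.ncard_union_eq hdisj (Set.toFinite _) (Set.toFinite _)
    have hle := Set.ncard_le_ncard hsub (Set.toFinite _)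
    rw [this, ncard_emb, ncard_emb] at hle
    have hexp : 2 ^ g = 2 ^ (g-1) + 2 ^ (g-1) := by
      conv_lhs => rw [show g = (g-1) + 1 by omega]
      rw [pow_succ]
      ring
    omega

end HCNStruct

-- ============ counting layer ============
section Counting
variable {n : ℕ}

lemma two_pow_ge (t : ℕ) : t + 1 ≤ 2 ^ t := Nat.lt_two_pow_self (n := t)

lemma helper_min (g' m' : ℕ) : min (2 ^ (g' + m')) (2 ^ g' * (m' + 1)) = 2 ^ g' * (m' + 1) := by
  apply min_eq_right
  rw [pow_add]
  apply Nat.mul_le_mul_left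
  exact two_pow_ge m'

/-- the set of potential anchors of `D` -/
def slotOf (D : Set (HVert n)) : Set (HVert n) :=
  {v | v ∈ D ∧ ((v.2 ≠ v.1 ∧ v.2 ∈ Prod.fst '' D) ∨
    (v.2 = v.1 ∧ (fun i => !v.1 i) ∈ Prod.fst '' D))}

lemma slotOf_subset (D : Set (HVert n)) : slotOf D ⊆ D := fun _ h => h.1

lemma cert_subset (hn : 0 < n) {D C : Set (HVert n)}
    (hDC : ∀ v ∈ D, ∀ u, (HCN n).Adj v u → u ∉ D → u ∈ C) (z : Fin n → Bool) :
    emb z (qball (clset z D) \ clset z D) ⊆ C := by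
  rintro w ⟨y', ⟨hy'q, hy'n⟩, rfl⟩
  rcases hy'q with hy' | ⟨y, hyT, hq⟩
  · exact absurd hy' hy'n
  · have hadj : (HCN n).Adj (z, y) (z, y') := (adj_same_cluster hn).2 hq
    have hvD : (z, y) ∈ D := hyT
    have hnD : (z, y') ∉ D := hy'n
    exact hDC _ hvD _ hadj hnD

lemma parts_mem (hn : 0 < n) {D C : Set (HVert n)}
    (hDC : ∀ v ∈ D, ∀ u, (HCN n).Adj v u → u ∉ D → u ∈ C)
    {v : HVert n} (hv : v ∈ D \ slotOf D) :
    pt v ∈ C ∧ (pt v).1 ∉ Prod.fst '' D := by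
  obtain ⟨hvD, hvS⟩ := hv
  have hfst : (pt v).1 ∉ Prod.fst '' D := by
    intro hmem
    apply hvS
    refine ⟨hvD, ?_⟩
    by_cases h : v.1 = v.2
    · refine Or.inr ⟨h.symm, ?_⟩
      have : (pt v).1 = (fun i => !v.1 i) := by unfold pt; rw [if_pos h]
      rwa [this] at hmem
    · refine Or.inl ⟨fun hc => h hc.symm, ?_⟩
      have : (pt v).1 = v.2 := by unfold pt; rw [if_neg h]
      rwa [this] at hmem
  have hptD : pt v ∉ D := by
    intro hc
    exact hfst ⟨pt v, hc, rfl⟩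
  exact ⟨hDC _ hvD _ (adj_pt hn v) hptD, hfst⟩

lemma ncard_parts {D : Set (HVert n)} :
    (pt '' (D \ slotOf D)).ncard = D.ncard - (slotOf D).ncard := by
  rw [Set.ncard_image_of_injective _ pt_injective,
    Set.ncard_diff (slotOf_subset D) (Set.toFinite _)]

/-- extract distinct elements -/
lemma exists_two {α : Type*} [Finite α] {s : Set α} (h : 2 ≤ s.ncard) :
    ∃ a ∈ s, ∃ b ∈ s, a ≠ b := by
  have h1 : 0 < s.ncard := by omega
  rw [Set.ncard_pos (Set.toFinite _)] at h1
  obtain ⟨a, ha⟩ := h1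
  have h2 : 0 < (s \ {a}).ncard := by
    rw [Set.ncard_diff (by simpa using ha) (Set.toFinite _)]
    rw [Set.ncard_singleton]
    omega
  rw [Set.ncard_pos (Set.toFinite _)] at h2
  obtain ⟨b, hb, hba⟩ := h2
  exact ⟨b, hb, a, ha, by simpa using hba⟩

lemma exists_four {α : Type*} [Finite α] {s : Set α} (h : 4 ≤ s.ncard) :
    ∃ a ∈ s, ∃ b ∈ s, ∃ c ∈ s, ∃ d ∈ s,
      a ≠ b ∧ a ≠ c ∧ a ≠ d ∧ b ≠ c ∧ b ≠ d ∧ c ≠ d := by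
  have h1 : 0 < s.ncard := by omega
  rw [Set.ncard_pos (Set.toFinite _)] at h1
  obtain ⟨a, ha⟩ := h1
  have e1 : (s \ {a}).ncard = s.ncard - 1 := by
    rw [Set.ncard_diff (by simpa using ha) (Set.toFinite _), Set.ncard_singleton]
  have h2 : 0 < (s \ {a}).ncard := by omega
  rw [Set.ncard_pos (Set.toFinite _)] at h2
  obtain ⟨b, hb⟩ := h2
  have e2 : ((s \ {a}) \ {b}).ncard = s.ncard - 2 := by
    rw [Set.ncard_diff (by simpa using hb) (Set.toFinite _), e1, Set.ncard_singleton]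
    omega
  have h3 : 0 < ((s \ {a}) \ {b}).ncard := by omega
  rw [Set.ncard_pos (Set.toFinite _)] at h3
  obtain ⟨c, hc⟩ := h3
  have e3 : (((s \ {a}) \ {b}) \ {c}).ncard = s.ncard - 3 := by
    rw [Set.ncard_diff (by simpa using hc) (Set.toFinite _), e2, Set.ncard_singleton]
    omega
  have h4 : 0 < (((s \ {a}) \ {b}) \ {c}).ncard := by omega
  rw [Set.ncard_pos (Set.toFinite _)] at h4
  obtain ⟨d, hd⟩ := h4
  obtain ⟨hbs, hbna⟩ := hb
  obtain ⟨⟨hcs, hcna⟩, hcnb⟩ := hc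
  obtain ⟨⟨⟨hds, hdna⟩, hdnb⟩, hdnc⟩ := hd
  refine ⟨a, ha, b, hbs, c, hcs, d, hds, ?_, ?_, ?_, ?_, ?_, ?_⟩ <;>
    first
      | (intro hc'; subst hc'; simp_all)
      | (intro hc'; exact (by simpa using hbna) hc'.symm)

end Counting

-- ============ per-case counting lemmas ============
section Cases
variable {n : ℕ}

lemma union4_ncard {α : Type*} [Finite α] {C : Set α} {s1 s2 s3 s4 : Set α}
    (h1 : s1 ⊆ C) (h2 : s2 ⊆ C) (h3 : s3 ⊆ C) (h4 : s4 ⊆ C)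
    (d12 : Disjoint s1 s2) (d13 : Disjoint s1 s3) (d14 : Disjoint s1 s4)
    (d23 : Disjoint s2 s3) (d24 : Disjoint s2 s4) (d34 : Disjoint s3 s4) :
    s1.ncard + s2.ncard + s3.ncard + s4.ncard ≤ C.ncard := by
  have e1 : (s1 ∪ s2).ncard = s1.ncard + s2.ncard :=
    Set.ncard_union_eq d12 (Set.toFinite _) (Set.toFinite _)
  have e2 : (s1 ∪ s2 ∪ s3).ncard = (s1 ∪ s2).ncard + s3.ncard :=
    Set.ncard_union_eq (Set.disjoint_union_left.2 ⟨d13, d23⟩) (Set.toFinite _) (Set.toFinite _)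
  have e3 : (s1 ∪ s2 ∪ s3 ∪ s4).ncard = (s1 ∪ s2 ∪ s3).ncard + s4.ncard :=
    Set.ncard_union_eq (Set.disjoint_union_left.2 ⟨Set.disjoint_union_left.2 ⟨d14, d24⟩, d34⟩)
      (Set.toFinite _) (Set.toFinite _)
  have hsub : s1 ∪ s2 ∪ s3 ∪ s4 ⊆ C := by
    refine Set.union_subset (Set.union_subset (Set.union_subset h1 h2) h3) h4
  have := Set.ncard_le_ncard hsub (Set.toFinite _)
  omega

lemma emb_disjoint {z z' : Fin n → Bool} (hzz : z ≠ z') (S S' : Set (Fin n → Bool)) :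
    Disjoint (emb z S) (emb z' S') := by
  rw [Set.disjoint_left]
  rintro v hv hv'
  rw [mem_emb] at hv hv'
  exact hzz (hv.1.symm.trans hv'.1)

lemma disj_cert_parts (hn : 0 < n) {D C : Set (HVert n)}
    (hDC : ∀ v ∈ D, ∀ u, (HCN n).Adj v u → u ∉ D → u ∈ C)
    {z : Fin n → Bool} (hz : z ∈ Prod.fst '' D) (S : Set (Fin n → Bool)) :
    Disjoint (emb z S) (pt '' (D \ slotOf D)) := by
  rw [Set.disjoint_left]
  rintro v hv ⟨w, hw, rfl⟩
  rw [mem_emb] at hv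
  exact (parts_mem hn hDC hw).2 (hv.1 ▸ hz)

lemma clset_nonempty_of_mem {D : Set (HVert n)} {z : Fin n → Bool}
    (hz : z ∈ Prod.fst '' D) : (clset z D).Nonempty := by
  obtain ⟨v, hv, rfl⟩ := hz
  exact ⟨v.2, show (v.1, v.2) ∈ D by rw [Prod.mk.eta]; exact hv⟩

lemma fst_mem_of_mem {D : Set (HVert n)} {v : HVert n} (hv : v ∈ D) :
    v.1 ∈ Prod.fst '' D := ⟨v, hv, rfl⟩

lemma mem_clset_iff {D : Set (HVert n)} {z y : Fin n → Bool} :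
    y ∈ clset z D ↔ (z, y) ∈ D := Iff.rfl

/-- per-cluster closure bound at level g-1 -/
lemma qb_bound {g m : ℕ} (hn : 0 < n) (hg : 1 ≤ g) (hmn : n = g + m)
    {D : Set (HVert n)} (hmd : hmindeg g D) {z : Fin n → Bool}
    (hz : (clset z D).Nonempty) :
    2 ^ (g - 1) * (m + 2) ≤ (qball (clset z D)).ncard := by
  have h := qsb (g - 1) (clset z D) hz (clset_mindeg hmd z hn)
  rw [Fintype.card_fin] at h
  have h1 : n + 1 - (g - 1) = m + 2 := by omega
  rw [h1] at h
  have h2 := helper_min (g - 1) (m + 1)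
  have h3 : (g - 1) + (m + 1) = n := by omega
  rw [h3] at h2
  have h4 : (m + 1) + 1 = m + 2 := rfl
  rw [h4] at h2
  omega

/-- per-cluster closure bound at level g (for sets confined to one cluster) -/
lemma qb_bound_full {g m : ℕ} (hn : 0 < n) (hg : 1 ≤ g) (hmn : n = g + m)
    {D : Set (HVert n)} (hmd : hmindeg g D) {z : Fin n → Bool}
    (hz : (clset z D).Nonempty) (hone : ∀ v ∈ D, v.1 = z) :
    2 ^ g * (m + 1) ≤ (qball (clset z D)).ncard := by
  have h := qsb g (clset z D) hz (clset_mindeg_full hmd z hn hone)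
  rw [Fintype.card_fin] at h
  have h1 : n + 1 - g = m + 1 := by omega
  rw [h1] at h
  have h2 := helper_min g m
  have h3 : g + m = n := by omega
  rw [h3] at h2
  omega

lemma emb_qball_subset_of_closed (hn : 0 < n) {S E : Set (HVert n)}
    (hclosed : ∀ v ∈ S, ∀ u, (HCN n).Adj v u → u ∈ E) (hSE : S ⊆ E)
    (z : Fin n → Bool) : emb z (qball (clset z S)) ⊆ E := by
  rintro w ⟨y', hy', rfl⟩
  rcases hy' with hy' | ⟨y, hyT, hq⟩
  · exact hSE hy'
  · exact hclosed _ hyT _ ((adj_same_cluster hn).2 hq)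

/-- the closed-neighborhood bound for HCN -/
lemma hcn_qh {g m : ℕ} (hn : 0 < n) (hg : 1 ≤ g) (hmn : n = g + m) (hm1 : 1 ≤ m)
    {S E : Set (HVert n)} (hne : S.Nonempty) (hS : hmindeg g S)
    (hclosed : ∀ v ∈ S, ∀ u, (HCN n).Adj v u → u ∈ E) (hSE : S ⊆ E) :
    2 ^ g * (m + 2) ≤ E.ncard := by
  obtain ⟨v0, hv0⟩ := hne
  by_cases hone : ∀ v ∈ S, v.1 = v0.1
  · -- single cluster
    have hTne : (clset v0.1 S).Nonempty := clset_nonempty_of_mem (fst_mem_of_mem hv0)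
    have hqb := qb_bound_full hn hg hmn hS hTne hone
    have hTsz : 2 ^ g ≤ (clset v0.1 S).ncard :=
      size_lemma g _ hTne (clset_mindeg_full hS v0.1 hn hone)
    have hc1 : emb v0.1 (qball (clset v0.1 S)) ⊆ E :=
      emb_qball_subset_of_closed hn hclosed hSE v0.1
    have hc2 : pt '' S ⊆ E := by
      rintro w ⟨v, hv, rfl⟩
      exact hclosed _ hv _ (adj_pt hn v)
    have hdisj : Disjoint (emb v0.1 (qball (clset v0.1 S))) (pt '' S) := by
      rw [Set.disjoint_left]
      rintro w hw ⟨v, hv, rfl⟩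
      rw [mem_emb] at hw
      exact pt_fst_ne hn v (hw.1.trans (hone v hv).symm)
    have hle := union4_ncard hc1 hc2 (Set.empty_subset E) (Set.empty_subset E)
      hdisj (disjoint_bot_right) (disjoint_bot_right) (disjoint_bot_right)
      (disjoint_bot_right) (disjoint_bot_right)
    rw [Set.ncard_empty, ncard_emb, Set.ncard_image_of_injective _ pt_injective] at hle
    have hSs : 2 ^ g ≤ S.ncard := by
      calc 2 ^ g ≤ (clset v0.1 S).ncard := hTsz
        _ = (emb v0.1 (clset v0.1 S)).ncard := (ncard_emb _ _).symm
        _ ≤ S.ncard := Set.ncard_le_ncard (emb_clset_subset _ _) (Set.toFinite _)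
    have harith : 2 ^ g * (m + 2) = 2 ^ g * (m + 1) + 2 ^ g := by ring
    omega
  · push_neg at hone
    obtain ⟨w0, hw0, hwne⟩ := hone
    have hT1 : (clset v0.1 S).Nonempty := clset_nonempty_of_mem (fst_mem_of_mem hv0)
    have hT2 : (clset w0.1 S).Nonempty := clset_nonempty_of_mem (fst_mem_of_mem hw0)
    have hq1 := qb_bound hn hg hmn hS hT1
    have hq2 := qb_bound hn hg hmn hS hT2
    have hc1 : emb v0.1 (qball (clset v0.1 S)) ⊆ E :=
      emb_qball_subset_of_closed hn hclosed hSE v0.1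
    have hc2 : emb w0.1 (qball (clset w0.1 S)) ⊆ E :=
      emb_qball_subset_of_closed hn hclosed hSE w0.1
    have hle := union4_ncard hc1 hc2 (Set.empty_subset E) (Set.empty_subset E)
      (emb_disjoint (fun h => hwne h.symm) _ _) (disjoint_bot_right) (disjoint_bot_right)
      (disjoint_bot_right) (disjoint_bot_right) (disjoint_bot_right)
    rw [Set.ncard_empty, ncard_emb, ncard_emb] at hle
    have harith : 2 ^ g * (m + 2) = 2 ^ (g-1) * (m + 2) + 2 ^ (g-1) * (m+2) := by
      conv_lhs => rw [show g = (g-1)+1 by omega]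
      rw [pow_succ]
      ring
    omega

end Cases

-- ============ split helpers and k=1, k>=4 ============
section Cases2
variable {n : ℕ}

lemma qb_two {z : Fin n → Bool} {D : Set (HVert n)} (h2 : 2 ≤ (clset z D).ncard) :
    2 * n ≤ (qball (clset z D)).ncard := by
  obtain ⟨a, ha, b, hb, hab⟩ := exists_two h2
  have := twoball ha hb hab
  rwa [Fintype.card_fin] at this

lemma slot_le_clset (D : Set (HVert n)) (z : Fin n → Bool) :
    (slotOf D ∩ {v | v.1 = z}).ncard ≤ (clset z D).ncard := by
  have himg : Prod.snd '' (slotOf D ∩ {v | v.1 = z}) ⊆ clset z D := by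
    rintro y ⟨v, ⟨hvS, hv1⟩, rfl⟩
    rw [mem_clset_iff, ← hv1, Prod.mk.eta]
    exact slotOf_subset D hvS
  have hinj : Set.InjOn Prod.snd (slotOf D ∩ {v | v.1 = z}) := by
    rintro u ⟨-, hu⟩ v ⟨-, hv⟩ h
    have hu' : u.1 = z := hu
    have hv' : v.1 = z := hv
    exact Prod.ext (hu'.trans hv'.symm) h
  calc (slotOf D ∩ {v | v.1 = z}).ncard
      = (Prod.snd '' (slotOf D ∩ {v | v.1 = z})).ncard := (Set.ncard_image_of_injOn hinj).symm
    _ ≤ (clset z D).ncard := Set.ncard_le_ncard himg (Set.toFinite _)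

lemma split2 {D : Set (HVert n)} {z1 z2 : Fin n → Bool} (h12 : z1 ≠ z2)
    (hone : ∀ v ∈ D, v.1 = z1 ∨ v.1 = z2) :
    D.ncard = (D ∩ {v | v.1 = z1}).ncard + (D ∩ {v | v.1 = z2}).ncard := by
  have hU : D = (D ∩ {v | v.1 = z1}) ∪ (D ∩ {v | v.1 = z2}) := by
    ext v
    constructor
    · intro hv
      rcases hone v hv with h | h
      · exact Or.inl ⟨hv, h⟩
      · exact Or.inr ⟨hv, h⟩
    · rintro (⟨h, -⟩ | ⟨h, -⟩) <;> exact h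
  have hdisj : Disjoint (D ∩ {v | v.1 = z1}) (D ∩ {v | v.1 = z2}) := by
    rw [Set.disjoint_left]
    rintro v ⟨-, h1⟩ ⟨-, h2⟩
    have h1' : v.1 = z1 := h1
    have h2' : v.1 = z2 := h2
    exact h12 (h1'.symm.trans h2')
  conv_lhs => rw [hU]
  exact Set.ncard_union_eq hdisj (Set.toFinite _) (Set.toFinite _)

lemma split3 {D : Set (HVert n)} {z1 z2 z3 : Fin n → Bool} (h12 : z1 ≠ z2) (h13 : z1 ≠ z3)
    (h23 : z2 ≠ z3) (hone : ∀ v ∈ D, v.1 = z1 ∨ v.1 = z2 ∨ v.1 = z3) :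
    D.ncard = (D ∩ {v | v.1 = z1}).ncard + (D ∩ {v | v.1 = z2}).ncard
      + (D ∩ {v | v.1 = z3}).ncard := by
  have hU : D = (D ∩ {v | v.1 = z1}) ∪ ((D ∩ {v | v.1 = z2}) ∪ (D ∩ {v | v.1 = z3})) := by
    ext v
    constructor
    · intro hv
      rcases hone v hv with h | h | h
      · exact Or.inl ⟨hv, h⟩
      · exact Or.inr (Or.inl ⟨hv, h⟩)
      · exact Or.inr (Or.inr ⟨hv, h⟩)
    · rintro (⟨h, -⟩ | ⟨h, -⟩ | ⟨h, -⟩) <;> exact h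
  have hd12 : Disjoint (D ∩ {v | v.1 = z1}) (D ∩ {v | v.1 = z2}) := by
    rw [Set.disjoint_left]; rintro v ⟨-, h1⟩ ⟨-, h2⟩
    exact h12 ((show v.1 = z1 from h1).symm.trans h2)
  have hd13 : Disjoint (D ∩ {v | v.1 = z1}) (D ∩ {v | v.1 = z3}) := by
    rw [Set.disjoint_left]; rintro v ⟨-, h1⟩ ⟨-, h2⟩
    exact h13 ((show v.1 = z1 from h1).symm.trans h2)
  have hd23 : Disjoint (D ∩ {v | v.1 = z2}) (D ∩ {v | v.1 = z3}) := by
    rw [Set.disjoint_left]; rintro v ⟨-, h1⟩ ⟨-, h2⟩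
    exact h23 ((show v.1 = z2 from h1).symm.trans h2)
  conv_lhs => rw [hU]
  rw [Set.ncard_union_eq (by rw [Set.disjoint_union_right]; exact ⟨hd12, hd13⟩)
    (Set.toFinite _) (Set.toFinite _),
    Set.ncard_union_eq hd23 (Set.toFinite _) (Set.toFinite _)]
  ring

lemma clset_eq_inter (D : Set (HVert n)) (z : Fin n → Bool) :
    (D ∩ {v | v.1 = z}).ncard = (clset z D).ncard := by
  have : D ∩ {v | v.1 = z} = emb z (clset z D) := by
    ext v
    constructor
    · rintro ⟨hv, h1⟩
      rw [mem_emb]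
      exact ⟨h1, by rw [mem_clset_iff, ← (show v.1 = z from h1), Prod.mk.eta]; exact hv⟩
    · rintro ⟨y, hy, rfl⟩
      exact ⟨hy, rfl⟩
  rw [this, ncard_emb]

lemma key_count1 {g m : ℕ} (hn : 0 < n) (hg : 1 ≤ g) (hmn : n = g + m) (hm1 : 1 ≤ m)
    {D C : Set (HVert n)}
    (hDC : ∀ v ∈ D, ∀ u, (HCN n).Adj v u → u ∉ D → u ∈ C)
    (hmd : hmindeg g D)
    (hk : (Prod.fst '' D).ncard = 1)
    (hdge : 2 ^ (g + 1) ≤ D.ncard) :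
    2 * (2 ^ g * (m + 2)) ≤ 2 * C.ncard + D.ncard := by
  rw [Set.ncard_eq_one] at hk
  obtain ⟨z0, hz0⟩ := hk
  have hone : ∀ v ∈ D, v.1 = z0 := by
    intro v hv
    have := fst_mem_of_mem hv
    rw [hz0] at this
    simpa using this
  have hz0Z : z0 ∈ Prod.fst '' D := by rw [hz0]; rfl
  have hTne := clset_nonempty_of_mem hz0Z
  have hqb := qb_bound_full hn hg hmn hmd hTne hone
  have htd : (clset z0 D).ncard = D.ncard := by
    rw [← clset_eq_inter D z0]
    congr 1
    apply Set.Subset.antisymm (Set.inter_subset_left)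
    intro v hv
    exact ⟨hv, hone v hv⟩
  have hslot : slotOf D = ∅ := by
    ext v
    simp only [Set.mem_empty_iff_false, iff_false]
    rintro ⟨hvD, ⟨hne2, hmem⟩ | ⟨heq, hmem⟩⟩
    · rw [hz0] at hmem
      have h1 := hone v hvD
      apply hne2
      rw [h1]
      simpa using hmem
    · rw [hz0] at hmem
      have h1 := hone v hvD
      have h2 : (fun i => !v.1 i) = z0 := by simpa using hmem
      rw [h1] at h2
      exact compl_ne hn z0 h2
  have hcert := cert_subset hn hDC z0
  have hparts : pt '' (D \ slotOf D) ⊆ C := by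
    rintro w ⟨v, hv, rfl⟩
    exact (parts_mem hn hDC hv).1
  have hdisj := disj_cert_parts hn hDC hz0Z (qball (clset z0 D) \ clset z0 D)
  have hle := union4_ncard hcert hparts (Set.empty_subset C) (Set.empty_subset C)
    hdisj disjoint_bot_right disjoint_bot_right disjoint_bot_right disjoint_bot_right
    disjoint_bot_right
  rw [Set.ncard_empty, ncard_emb, ncard_parts, hslot, Set.ncard_empty] at hle
  rw [Set.ncard_diff (subset_qball _) (Set.toFinite _)] at hle
  have hTle : (clset z0 D).ncard ≤ (qball (clset z0 D)).ncard :=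
    Set.ncard_le_ncard (subset_qball _) (Set.toFinite _)
  have harith : 2 ^ g * (m + 2) = 2 ^ g * (m + 1) + 2 ^ g := by ring
  have hp : 2 ^ (g + 1) = 2 ^ g + 2 ^ g := by rw [pow_succ]; ring
  omega

lemma key_count4 {g m : ℕ} (hn : 0 < n) (hg : 1 ≤ g) (hmn : n = g + m) (hm1 : 1 ≤ m)
    {D C : Set (HVert n)}
    (hDC : ∀ v ∈ D, ∀ u, (HCN n).Adj v u → u ∉ D → u ∈ C)
    (hmd : hmindeg g D)
    (hk : 4 ≤ (Prod.fst '' D).ncard) :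
    2 * (2 ^ g * (m + 2)) ≤ C.ncard + D.ncard := by
  obtain ⟨z1, hz1, z2, hz2, z3, hz3, z4, hz4, h12, h13, h14, h23, h24, h34⟩ := exists_four hk
  have hT1 := clset_nonempty_of_mem hz1
  have hT2 := clset_nonempty_of_mem hz2
  have hT3 := clset_nonempty_of_mem hz3
  have hT4 := clset_nonempty_of_mem hz4
  have hq1 := qb_bound hn hg hmn hmd hT1
  have hq2 := qb_bound hn hg hmn hmd hT2
  have hq3 := qb_bound hn hg hmn hmd hT3
  have hq4 := qb_bound hn hg hmn hmd hT4
  -- certificates inside C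
  have hle := union4_ncard (cert_subset hn hDC z1) (cert_subset hn hDC z2)
    (cert_subset hn hDC z3) (cert_subset hn hDC z4)
    (emb_disjoint h12 _ _) (emb_disjoint h13 _ _) (emb_disjoint h14 _ _)
    (emb_disjoint h23 _ _) (emb_disjoint h24 _ _) (emb_disjoint h34 _ _)
  rw [ncard_emb, ncard_emb, ncard_emb, ncard_emb,
    Set.ncard_diff (subset_qball _) (Set.toFinite _),
    Set.ncard_diff (subset_qball _) (Set.toFinite _),
    Set.ncard_diff (subset_qball _) (Set.toFinite _),
    Set.ncard_diff (subset_qball _) (Set.toFinite _)] at hle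
  -- the four cluster parts sit inside D
  have hled := union4_ncard (emb_clset_subset z1 D) (emb_clset_subset z2 D)
    (emb_clset_subset z3 D) (emb_clset_subset z4 D)
    (emb_disjoint h12 _ _) (emb_disjoint h13 _ _) (emb_disjoint h14 _ _)
    (emb_disjoint h23 _ _) (emb_disjoint h24 _ _) (emb_disjoint h34 _ _)
  rw [ncard_emb, ncard_emb, ncard_emb, ncard_emb] at hled
  have ht1 : (clset z1 D).ncard ≤ (qball (clset z1 D)).ncard :=
    Set.ncard_le_ncard (subset_qball _) (Set.toFinite _)
  have ht2 : (clset z2 D).ncard ≤ (qball (clset z2 D)).ncard :=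
    Set.ncard_le_ncard (subset_qball _) (Set.toFinite _)
  have ht3 : (clset z3 D).ncard ≤ (qball (clset z3 D)).ncard :=
    Set.ncard_le_ncard (subset_qball _) (Set.toFinite _)
  have ht4 : (clset z4 D).ncard ≤ (qball (clset z4 D)).ncard :=
    Set.ncard_le_ncard (subset_qball _) (Set.toFinite _)
  have hBP : 2 ^ g * (m + 2) = 2 * (2 ^ (g - 1) * (m + 2)) := by
    conv_lhs => rw [show g = (g - 1) + 1 by omega]
    rw [pow_succ]
    ring
  omega

end Cases2

-- ============ slot bounds and k=2 ============
section Cases3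
variable {n : ℕ}

lemma pair_ncard_le {α : Type*} (a b : α) : ({a, b} : Set α).ncard ≤ 2 := by
  classical
  calc ({a, b} : Set α).ncard ≤ ({b} : Set α).ncard + 1 := Set.ncard_insert_le a {b}
    _ = 2 := by rw [Set.ncard_singleton]

lemma triple_ncard_le {α : Type*} (a b c : α) : ({a, b, c} : Set α).ncard ≤ 3 := by
  classical
  calc ({a, b, c} : Set α).ncard ≤ ({b, c} : Set α).ncard + 1 := Set.ncard_insert_le a {b, c}
    _ ≤ 3 := by have := pair_ncard_le b c; omega

lemma slot_pair_bound {D : Set (HVert n)} {z w : Fin n → Bool}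
    (hZ : ∀ y ∈ Prod.fst '' D, y = z ∨ y = w) :
    (slotOf D ∩ {v | v.1 = z}).ncard ≤ 2 := by
  have hsub : slotOf D ∩ {v | v.1 = z} ⊆ {(z, w), (z, z)} := by
    rintro v ⟨⟨hvD, hcase⟩, hv1⟩
    have hv1' : v.1 = z := hv1
    rcases hcase with ⟨hne2, hmem⟩ | ⟨heq, hmem⟩
    · rcases hZ _ hmem with h | h
      · exact absurd (h.trans hv1'.symm) hne2
      · exact Or.inl (Prod.ext hv1' h)
    · exact Or.inr (Prod.ext hv1' (heq.trans hv1'))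
  calc (slotOf D ∩ {v | v.1 = z}).ncard ≤ _ := Set.ncard_le_ncard hsub (Set.toFinite _)
    _ ≤ 2 := pair_ncard_le _ _

lemma slot_triple_bound {D : Set (HVert n)} {z w1 w2 : Fin n → Bool}
    (hZ : ∀ y ∈ Prod.fst '' D, y = z ∨ y = w1 ∨ y = w2) :
    (slotOf D ∩ {v | v.1 = z}).ncard ≤ 3 ∧
    ((fun i => !z i) ∉ Prod.fst '' D → (slotOf D ∩ {v | v.1 = z}).ncard ≤ 2) := by
  constructor
  · have hsub : slotOf D ∩ {v | v.1 = z} ⊆ {(z, w1), (z, w2), (z, z)} := by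
      rintro v ⟨⟨hvD, hcase⟩, hv1⟩
      have hv1' : v.1 = z := hv1
      rcases hcase with ⟨hne2, hmem⟩ | ⟨heq, hmem⟩
      · rcases hZ _ hmem with h | h | h
        · exact absurd (h.trans hv1'.symm) hne2
        · exact Or.inl (Prod.ext hv1' h)
        · exact Or.inr (Or.inl (Prod.ext hv1' h))
      · exact Or.inr (Or.inr (Prod.ext hv1' (heq.trans hv1')))
    calc (slotOf D ∩ {v | v.1 = z}).ncard ≤ _ := Set.ncard_le_ncard hsub (Set.toFinite _)
      _ ≤ 3 := triple_ncard_le _ _ _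
  · intro hnd
    have hsub : slotOf D ∩ {v | v.1 = z} ⊆ {(z, w1), (z, w2)} := by
      rintro v ⟨⟨hvD, hcase⟩, hv1⟩
      have hv1' : v.1 = z := hv1
      rcases hcase with ⟨hne2, hmem⟩ | ⟨heq, hmem⟩
      · rcases hZ _ hmem with h | h | h
        · exact absurd (h.trans hv1'.symm) hne2
        · exact Or.inl (Prod.ext hv1' h)
        · exact Or.inr (Prod.ext hv1' h)
      · exfalso
        apply hnd
        rw [← hv1']
        exact hmem
    calc (slotOf D ∩ {v | v.1 = z}).ncard ≤ _ := Set.ncard_le_ncard hsub (Set.toFinite _)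
      _ ≤ 2 := pair_ncard_le _ _

lemma key_count2 {g m : ℕ} (hn : 0 < n) (hg : 1 ≤ g) (hmn : n = g + m) (hm1 : 1 ≤ m)
    {D C : Set (HVert n)}
    (hDC : ∀ v ∈ D, ∀ u, (HCN n).Adj v u → u ∉ D → u ∈ C)
    (hmd : hmindeg g D)
    (hk : (Prod.fst '' D).ncard = 2)
    (hdge : 2 ^ (g + 1) ≤ D.ncard) :
    2 * (2 ^ g * (m + 2)) ≤ 2 * C.ncard + D.ncard := by
  obtain ⟨z1, z2, h12, hZ⟩ := Set.ncard_eq_two.1 hk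
  have hz1Z : z1 ∈ Prod.fst '' D := by rw [hZ]; exact Set.mem_insert _ _
  have hz2Z : z2 ∈ Prod.fst '' D := by rw [hZ]; exact Set.mem_insert_iff.2 (Or.inr rfl)
  have hone : ∀ v ∈ D, v.1 = z1 ∨ v.1 = z2 := by
    intro v hv
    have := fst_mem_of_mem hv
    rw [hZ] at this
    simpa using this
  have honeY : ∀ y ∈ Prod.fst '' D, y = z1 ∨ y = z2 := by
    intro y hy
    rw [hZ] at hy
    simpa using hy
  have hT1 := clset_nonempty_of_mem hz1Z
  have hT2 := clset_nonempty_of_mem hz2Z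
  have hparts : pt '' (D \ slotOf D) ⊆ C := by
    rintro w ⟨v, hv, rfl⟩
    exact (parts_mem hn hDC hv).1
  have hle := union4_ncard (cert_subset hn hDC z1) (cert_subset hn hDC z2)
    hparts (Set.empty_subset C)
    (emb_disjoint h12 _ _) (disj_cert_parts hn hDC hz1Z _) disjoint_bot_right
    (disj_cert_parts hn hDC hz2Z _) disjoint_bot_right disjoint_bot_right
  rw [Set.ncard_empty, ncard_emb, ncard_emb, ncard_parts,
    Set.ncard_diff (subset_qball _) (Set.toFinite _),
    Set.ncard_diff (subset_qball _) (Set.toFinite _)] at hle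
  have hdsum : D.ncard = (clset z1 D).ncard + (clset z2 D).ncard := by
    rw [split2 h12 hone, clset_eq_inter, clset_eq_inter]
  have hσsum : (slotOf D).ncard
      = (slotOf D ∩ {v | v.1 = z1}).ncard + (slotOf D ∩ {v | v.1 = z2}).ncard :=
    split2 h12 (fun v hv => hone v (slotOf_subset D hv))
  have hσ1 : (slotOf D ∩ {v | v.1 = z1}).ncard ≤ 2 := slot_pair_bound honeY
  have hσ2 : (slotOf D ∩ {v | v.1 = z2}).ncard ≤ 2 :=
    slot_pair_bound (fun y hy => (honeY y hy).symm)
  have hσle : (slotOf D).ncard ≤ D.ncard :=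
    Set.ncard_le_ncard (slotOf_subset D) (Set.toFinite _)
  have ht1le : (clset z1 D).ncard ≤ (qball (clset z1 D)).ncard :=
    Set.ncard_le_ncard (subset_qball _) (Set.toFinite _)
  have ht2le : (clset z2 D).ncard ≤ (qball (clset z2 D)).ncard :=
    Set.ncard_le_ncard (subset_qball _) (Set.toFinite _)
  rcases eq_or_lt_of_le hg with hg1 | hg2
  · -- g = 1
    have hg1' : g = 1 := hg1.symm
    subst hg1'
    have perc : ∀ z ∈ Prod.fst '' D, (slotOf D ∩ {v | v.1 = z}).ncard ≤ 2 →
        n + (slotOf D ∩ {v | v.1 = z}).ncard ≤ (qball (clset z D)).ncard := by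
      intro z hzZ hσ2'
      have hqb := qb_bound hn (le_refl 1) hmn hmd (clset_nonempty_of_mem hzZ)
      simp only [Nat.sub_self, pow_zero, one_mul] at hqb
      by_cases hσ : (slotOf D ∩ {v | v.1 = z}).ncard ≤ 1
      · omega
      · have h2 : 2 ≤ (clset z D).ncard := le_trans (by omega) (slot_le_clset D z)
        have := qb_two h2
        omega
    have hq1 := perc z1 hz1Z hσ1
    have hq2 := perc z2 hz2Z hσ2
    have hBeq : 2 ^ 1 * (m + 2) = 2 * n + 2 := by rw [pow_one]; omega
    have hp : (2 : ℕ) ^ (1 + 1) = 4 := by norm_num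
    omega
  · -- 2 ≤ g
    have hq1 := qb_bound hn hg hmn hmd hT1
    have hq2 := qb_bound hn hg hmn hmd hT2
    have h4 : 4 ≤ 2 ^ g := by
      calc (4 : ℕ) = 2 ^ 2 := by norm_num
        _ ≤ 2 ^ g := Nat.pow_le_pow_right (by norm_num) hg2
    have h8 : 8 ≤ 2 ^ (g + 1) := by
      calc (8 : ℕ) = 2 ^ 3 := by norm_num
        _ ≤ 2 ^ (g + 1) := Nat.pow_le_pow_right (by norm_num) (by omega)
    have hBP : 2 ^ g * (m + 2) = 2 * (2 ^ (g - 1) * (m + 2)) := by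
      conv_lhs => rw [show g = (g - 1) + 1 by omega]
      rw [pow_succ]
      ring
    omega

end Cases3

-- ============ k=3 ============
section Cases4
variable {n : ℕ}

lemma key_count3 {g m : ℕ} (hn : 0 < n) (hg : 1 ≤ g) (hmn : n = g + m) (hm1 : 1 ≤ m)
    {D C : Set (HVert n)}
    (hDC : ∀ v ∈ D, ∀ u, (HCN n).Adj v u → u ∉ D → u ∈ C)
    (hmd : hmindeg g D)
    (hk : (Prod.fst '' D).ncard = 3)
    (hdge : 2 ^ (g + 1) ≤ D.ncard) :
    2 * (2 ^ g * (m + 2)) ≤ 2 * C.ncard + D.ncard := by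
  obtain ⟨z1, z2, z3, h12, h13, h23, hZ⟩ := Set.ncard_eq_three.1 hk
  have hz1Z : z1 ∈ Prod.fst '' D := by rw [hZ]; exact Set.mem_insert _ _
  have hz2Z : z2 ∈ Prod.fst '' D := by rw [hZ]; exact Set.mem_insert_iff.2 (Or.inr (Set.mem_insert _ _))
  have hz3Z : z3 ∈ Prod.fst '' D := by
    rw [hZ]; exact Set.mem_insert_iff.2 (Or.inr (Set.mem_insert_iff.2 (Or.inr rfl)))
  have honeY : ∀ y ∈ Prod.fst '' D, y = z1 ∨ y = z2 ∨ y = z3 := by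
    intro y hy
    rw [hZ] at hy
    simpa using hy
  have hone : ∀ v ∈ D, v.1 = z1 ∨ v.1 = z2 ∨ v.1 = z3 :=
    fun v hv => honeY _ (fst_mem_of_mem hv)
  have hT1 := clset_nonempty_of_mem hz1Z
  have hT2 := clset_nonempty_of_mem hz2Z
  have hT3 := clset_nonempty_of_mem hz3Z
  have hparts : pt '' (D \ slotOf D) ⊆ C := by
    rintro w ⟨v, hv, rfl⟩
    exact (parts_mem hn hDC hv).1
  have hle := union4_ncard (cert_subset hn hDC z1) (cert_subset hn hDC z2)
    (cert_subset hn hDC z3) hparts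
    (emb_disjoint h12 _ _) (emb_disjoint h13 _ _) (disj_cert_parts hn hDC hz1Z _)
    (emb_disjoint h23 _ _) (disj_cert_parts hn hDC hz2Z _) (disj_cert_parts hn hDC hz3Z _)
  rw [ncard_emb, ncard_emb, ncard_emb, ncard_parts,
    Set.ncard_diff (subset_qball _) (Set.toFinite _),
    Set.ncard_diff (subset_qball _) (Set.toFinite _),
    Set.ncard_diff (subset_qball _) (Set.toFinite _)] at hle
  have hdsum : D.ncard = (clset z1 D).ncard + (clset z2 D).ncard + (clset z3 D).ncard := by
    rw [split3 h12 h13 h23 hone, clset_eq_inter, clset_eq_inter, clset_eq_inter]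
  have hσsum : (slotOf D).ncard = (slotOf D ∩ {v | v.1 = z1}).ncard
      + (slotOf D ∩ {v | v.1 = z2}).ncard + (slotOf D ∩ {v | v.1 = z3}).ncard :=
    split3 h12 h13 h23 (fun v hv => hone v (slotOf_subset D hv))
  have hσle : (slotOf D).ncard ≤ D.ncard :=
    Set.ncard_le_ncard (slotOf_subset D) (Set.toFinite _)
  have ht1le : (clset z1 D).ncard ≤ (qball (clset z1 D)).ncard :=
    Set.ncard_le_ncard (subset_qball _) (Set.toFinite _)
  have ht2le : (clset z2 D).ncard ≤ (qball (clset z2 D)).ncard :=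
    Set.ncard_le_ncard (subset_qball _) (Set.toFinite _)
  have ht3le : (clset z3 D).ncard ≤ (qball (clset z3 D)).ncard :=
    Set.ncard_le_ncard (subset_qball _) (Set.toFinite _)
  have hb1 := slot_triple_bound (z := z1) (w1 := z2) (w2 := z3) honeY
  have hb2 := slot_triple_bound (z := z2) (w1 := z1) (w2 := z3)
    (fun y hy => by rcases honeY y hy with h | h | h <;> tauto)
  have hb3 := slot_triple_bound (z := z3) (w1 := z1) (w2 := z2)
    (fun y hy => by rcases honeY y hy with h | h | h <;> tauto)
  -- not all three clusters can have a diagonal anchor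
  have hnotall : (slotOf D ∩ {v | v.1 = z1}).ncard ≠ 3 ∨
      (slotOf D ∩ {v | v.1 = z2}).ncard ≠ 3 ∨ (slotOf D ∩ {v | v.1 = z3}).ncard ≠ 3 := by
    by_contra hcon
    push_neg at hcon
    obtain ⟨he1, he2, he3⟩ := hcon
    have hd1 : (fun i => !z1 i) ∈ Prod.fst '' D := by
      by_contra hc; have := hb1.2 hc; omega
    have hd2 : (fun i => !z2 i) ∈ Prod.fst '' D := by
      by_contra hc; have := hb2.2 hc; omega
    have hd3 : (fun i => !z3 i) ∈ Prod.fst '' D := by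
      by_contra hc; have := hb3.2 hc; omega
    have hcompl : ∀ z w : Fin n → Bool, (fun i => !z i) = w → (fun i => !w i) = z := by
      intro z w h
      rw [← h]
      exact compl_compl z
    rcases honeY _ hd1 with h1 | h1 | h1
    · exact compl_ne hn z1 h1
    · -- !z1 = z2, so !z2 = z1
      have e21 := hcompl _ _ h1
      rcases honeY _ hd3 with h3 | h3 | h3
      · exact h23 (h1.symm.trans (hcompl _ _ h3))
      · exact h13 (e21.symm.trans (hcompl _ _ h3))
      · exact compl_ne hn z3 h3
    · -- !z1 = z3, so !z3 = z1
      have e31 := hcompl _ _ h1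
      rcases honeY _ hd2 with h2 | h2 | h2
      · exact h23 ((hcompl _ _ h2).symm.trans h1)
      · exact compl_ne hn z2 h2
      · exact h12 (e31.symm.trans (hcompl _ _ h2))
  rcases eq_or_lt_of_le hg with hg1 | hg2
  · -- g = 1
    have hg1' : g = 1 := hg1.symm
    subst hg1'
    have perc : ∀ z ∈ Prod.fst '' D, (slotOf D ∩ {v | v.1 = z}).ncard ≤ 3 →
        n + (slotOf D ∩ {v | v.1 = z}).ncard
          ≤ (qball (clset z D)).ncard + ((slotOf D ∩ {v | v.1 = z}).ncard - 2) := by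
      intro z hzZ hσ3
      have hqb := qb_bound hn (le_refl 1) hmn hmd (clset_nonempty_of_mem hzZ)
      simp only [Nat.sub_self, pow_zero, one_mul] at hqb
      by_cases hσ : (slotOf D ∩ {v | v.1 = z}).ncard ≤ 1
      · omega
      · have h2 : 2 ≤ (clset z D).ncard := le_trans (by omega) (slot_le_clset D z)
        have := qb_two h2
        omega
    have hq1 := perc z1 hz1Z hb1.1
    have hq2 := perc z2 hz2Z hb2.1
    have hq3 := perc z3 hz3Z hb3.1
    have hBeq : 2 ^ 1 * (m + 2) = 2 * n + 2 := by rw [pow_one]; omega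
    have hp : (2 : ℕ) ^ (1 + 1) = 4 := by norm_num
    have hs31 := hb1.1
    have hs32 := hb2.1
    have hs33 := hb3.1
    omega
  · -- 2 ≤ g
    have hq1 := qb_bound hn hg hmn hmd hT1
    have hq2 := qb_bound hn hg hmn hmd hT2
    have hq3 := qb_bound hn hg hmn hmd hT3
    have h4 : 4 ≤ 2 ^ g := by
      calc (4 : ℕ) = 2 ^ 2 := by norm_num
        _ ≤ 2 ^ g := Nat.pow_le_pow_right (by norm_num) hg2
    have h8 : 8 ≤ 2 ^ (g + 1) := by
      calc (8 : ℕ) = 2 ^ 3 := by norm_num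
        _ ≤ 2 ^ (g + 1) := Nat.pow_le_pow_right (by norm_num) (by omega)
    have hP6 : 6 ≤ 2 ^ (g - 1) * (m + 2) := by
      have h2' : 2 ≤ 2 ^ (g - 1) := by
        calc (2 : ℕ) = 2 ^ 1 := by norm_num
          _ ≤ 2 ^ (g - 1) := Nat.pow_le_pow_right (by norm_num) (by omega)
      calc (6 : ℕ) = 2 * 3 := by norm_num
        _ ≤ 2 ^ (g - 1) * (m + 2) := Nat.mul_le_mul h2' (by omega)
    have hBP : 2 ^ g * (m + 2) = 2 * (2 ^ (g - 1) * (m + 2)) := by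
      conv_lhs => rw [show g = (g - 1) + 1 by omega]
      rw [pow_succ]
      ring
    have hs31 := hb1.1
    have hs32 := hb2.1
    have hs33 := hb3.1
    omega

end Cases4

-- ============ main theorem ============
section Main

theorem stmt16 (n g : ℕ) (hn : 2 ≤ n) (hg1 : 1 ≤ g) (hg2 : g ≤ n - 1)
    (F1 F2 : Set (HVert n)) (hne : F1 ≠ F2)
    (h1 : GoodNbrSet n g F1) (h2 : GoodNbrSet n g F2)
    (hc1 : F1.ncard ≤ 2 ^ g * (n + 2 - g) - 1)
    (hc2 : F2.ncard ≤ 2 ^ g * (n + 2 - g) - 1) :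
    ∃ u ∉ F1 ∪ F2, ∃ v ∈ symmDiff F1 F2, (HCN n).Adj u v := by
  classical
  by_contra hcon
  push_neg at hcon
  have hn0 : 0 < n := by omega
  set m := n - g with hmdef
  have hm1 : 1 ≤ m := by omega
  have hmn : n = g + m := by omega
  have hBrw : 2 ^ g * (n + 2 - g) = 2 ^ g * (m + 2) := by congr 1; omega
  rw [hBrw] at hc1 hc2
  have hBpos : 1 ≤ 2 ^ g * (m + 2) := by
    have : 0 < 2 ^ g * (m + 2) := by positivity
    omega
  set D := symmDiff F1 F2 with hD
  set A1 := F1 \ F2 with hA1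
  set A2 := F2 \ F1 with hA2
  set C := F1 ∩ F2 with hC
  have hDdef : D = A1 ∪ A2 := by
    rw [hD, hA1, hA2, Set.symmDiff_def]
  have hDne : D.Nonempty := by
    rw [Set.nonempty_iff_ne_empty]
    intro hc
    apply hne
    have : symmDiff F1 F2 = ⊥ := hc
    exact symmDiff_eq_bot.1 this
  have hmemD : ∀ v, v ∈ D ↔ ((v ∈ F1 ∧ v ∉ F2) ∨ (v ∈ F2 ∧ v ∉ F1)) := by
    intro v
    rw [hD]
    exact Set.mem_symmDiff
  -- no-edge consequence
  have hDC : ∀ v ∈ D, ∀ u, (HCN n).Adj v u → u ∉ D → u ∈ C := by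
    intro v hv u hadj hu
    have huF : u ∈ F1 ∪ F2 := by
      by_contra hc
      exact hcon u hc v hv hadj.symm
    rw [hmemD] at hu
    push_neg at hu
    rcases huF with h | h
    · exact ⟨h, hu.1 h⟩
    · exact ⟨hu.2 h, h⟩
  -- min-degree facts
  have hmdA2 : hmindeg g A2 := by
    intro a ha
    have hgood := h1 a ha.2
    have hsub : ((HCN n).neighborSet a) \ F1 ⊆ {u | u ∈ A2 ∧ (HCN n).Adj a u} := by
      rintro u ⟨hu1, hu2⟩
      rw [SimpleGraph.mem_neighborSet] at hu1
      refine ⟨⟨?_, hu2⟩, hu1⟩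
      by_contra hc
      have huF : u ∉ F1 ∪ F2 := by
        rintro (h | h)
        · exact hu2 h
        · exact hc h
      exact hcon u huF a ((hmemD a).2 (Or.inr ⟨ha.1, ha.2⟩)) hu1.symm
    exact le_trans hgood (Set.ncard_le_ncard hsub (Set.toFinite _))
  have hmdA1 : hmindeg g A1 := by
    intro a ha
    have hgood := h2 a ha.2
    have hsub : ((HCN n).neighborSet a) \ F2 ⊆ {u | u ∈ A1 ∧ (HCN n).Adj a u} := by
      rintro u ⟨hu1, hu2⟩
      rw [SimpleGraph.mem_neighborSet] at hu1
      refine ⟨⟨?_, hu2⟩, hu1⟩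
      by_contra hc
      have huF : u ∉ F1 ∪ F2 := by
        rintro (h | h)
        · exact hc h
        · exact hu2 h
      exact hcon u huF a ((hmemD a).2 (Or.inl ⟨ha.1, ha.2⟩)) hu1.symm
    exact le_trans hgood (Set.ncard_le_ncard hsub (Set.toFinite _))
  have hmdD : hmindeg g D := by
    intro v hv
    rw [hmemD] at hv
    rcases hv with hv | hv
    · have := hmdA1 v ⟨hv.1, hv.2⟩
      refine le_trans this (Set.ncard_le_ncard ?_ (Set.toFinite _))
      rintro u ⟨hu1, hu2⟩
      exact ⟨(hmemD u).2 (Or.inl ⟨hu1.1, hu1.2⟩), hu2⟩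
    · have := hmdA2 v ⟨hv.1, hv.2⟩
      refine le_trans this (Set.ncard_le_ncard ?_ (Set.toFinite _))
      rintro u ⟨hu1, hu2⟩
      exact ⟨(hmemD u).2 (Or.inr ⟨hu1.1, hu1.2⟩), hu2⟩
  -- cardinality bookkeeping
  have hcC1 : C.ncard + A1.ncard = F1.ncard := by
    rw [hC, hA1]
    rw [← Set.ncard_union_eq ?dis (Set.toFinite _) (Set.toFinite _)]
    · rw [Set.inter_union_diff]
    case dis =>
      rw [Set.disjoint_left]
      rintro v ⟨-, h2'⟩ ⟨-, h3⟩
      exact h3 h2'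
  have hcC2 : C.ncard + A2.ncard = F2.ncard := by
    rw [hC, hA2, Set.inter_comm]
    rw [← Set.ncard_union_eq ?dis (Set.toFinite _) (Set.toFinite _)]
    · rw [Set.inter_union_diff]
    case dis =>
      rw [Set.disjoint_left]
      rintro v ⟨-, h2'⟩ ⟨-, h3⟩
      exact h3 h2'
  have hdsum : D.ncard = A1.ncard + A2.ncard := by
    rw [hDdef]
    refine Set.ncard_union_eq ?_ (Set.toFinite _) (Set.toFinite _)
    rw [Set.disjoint_left]
    rintro v ⟨h1', h2'⟩ ⟨h3, h4⟩
    exact h2' h3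
  -- degenerate cases : one side of the symmetric difference empty
  by_cases hA1e : A1 = ∅
  · have hDA2 : D = A2 := by rw [hDdef, hA1e, Set.empty_union]
    have hq := hcn_qh hn0 hg1 hmn hm1 (S := D) (E := F2) hDne hmdD ?_ ?_
    · omega
    · intro v hv u hadj
      by_cases hu : u ∈ D
      · rw [hDA2] at hu
        exact hu.1
      · exact (hDC v hv u hadj hu).2
    · rw [hDA2]
      intro v hv
      exact hv.1
  by_cases hA2e : A2 = ∅
  · have hDA1 : D = A1 := by rw [hDdef, hA2e, Set.union_empty]
    have hq := hcn_qh hn0 hg1 hmn hm1 (S := D) (E := F1) hDne hmdD ?_ ?_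
    · omega
    · intro v hv u hadj
      by_cases hu : u ∈ D
      · rw [hDA1] at hu
        exact hu.1
      · exact (hDC v hv u hadj hu).1
    · rw [hDA1]
      intro v hv
      exact hv.1
  -- main case
  have hA1ne : A1.Nonempty := Set.nonempty_iff_ne_empty.2 hA1e
  have hA2ne : A2.Nonempty := Set.nonempty_iff_ne_empty.2 hA2e
  have hs1 : 2 ^ g ≤ A1.ncard := hcn_size hn0 hg1 hA1ne hmdA1
  have hs2 : 2 ^ g ≤ A2.ncard := hcn_size hn0 hg1 hA2ne hmdA2
  have hdge : 2 ^ (g + 1) ≤ D.ncard := by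
    have hp : 2 ^ (g + 1) = 2 ^ g + 2 ^ g := by rw [pow_succ]; ring
    omega
  have hk1 : 1 ≤ (Prod.fst '' D).ncard := by
    have : (Prod.fst '' D).Nonempty := hDne.image _
    have := (Set.ncard_pos (Set.toFinite _)).2 this
    omega
  rcases lt_or_ge ((Prod.fst '' D).ncard) 4 with hklt | hk4
  · have hkcase : (Prod.fst '' D).ncard = 1 ∨ (Prod.fst '' D).ncard = 2 ∨
        (Prod.fst '' D).ncard = 3 := by omega
    rcases hkcase with hk | hk | hk
    · have := key_count1 hn0 hg1 hmn hm1 hDC hmdD hk hdge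
      omega
    · have := key_count2 hn0 hg1 hmn hm1 hDC hmdD hk hdge
      omega
    · have := key_count3 hn0 hg1 hmn hm1 hDC hmdD hk hdge
      omega
  · have := key_count4 hn0 hg1 hmn hm1 hDC hmdD hk4
    omega

end Main

end HCNP

/-- For n ≥ 2 and 1 ≤ g ≤ n-1, any two distinct g-good-neighbor faulty sets of
HCN_n of size at most 2^g(n+2-g)-1 are distinguishable: there is an edge from
outside F₁ ∪ F₂ into the symmetric difference F₁ Δ F₂. -/
theorem stmt_16 (n g : ℕ) (hn : 2 ≤ n) (hg1 : 1 ≤ g) (hg2 : g ≤ n - 1)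
    (F1 F2 : Set (HVert n)) (hne : F1 ≠ F2)
    (h1 : GoodNbrSet n g F1) (h2 : GoodNbrSet n g F2)
    (hc1 : F1.ncard ≤ 2 ^ g * (n + 2 - g) - 1)
    (hc2 : F2.ncard ≤ 2 ^ g * (n + 2 - g) - 1) :
    ∃ u ∉ F1 ∪ F2, ∃ v ∈ symmDiff F1 F2, (HCN n).Adj u v := HCNP.stmt16 n g hn hg1 hg2 F1 F2 hne h1 h2 hc1 hc2
end
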